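/- arXiv:1801.00367 — 4 statements merged into one kernel-verified Lean document; each statement's English description precedes it below -/
import Mathlib

section
/- Let u be a positive radial solution of (E) on (0,R) for some R > 0 such that lim_{r→0⁺} u(r) = γ for some γ > 0. Then lim_{r→0⁺} r^{n−1} u'(r) = 0 and lim_{r→0⁺} r^{s−1} u'(r) = −γ^{2*(s)−1}/(n−s). -/
set_option maxHeartbeats 800000

open Filter Set Real MeasureTheory intervalIntegral
open scoped Topology

noncomputable section

/-- The critical Hardy–Sobolev exponent `2*(s) = 2(n-s)/(n-2)`. -/
def twoStarS (n : ℕ) (s : ℝ) : ℝ := 2 * ((n : ℝ) - s) / ((n : ℝ) - 2)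

/-- The radial form of the equation `-Δu = |x|^{-s} u^{2*(s)-1} - μ u^q` at a point `r`. -/
def radialEq (n : ℕ) (s μ q : ℝ) (u : ℝ → ℝ) (r : ℝ) : Prop :=
  deriv (deriv u) r + (((n : ℝ) - 1) / r) * deriv u r
    + r ^ (-s) * u r ^ (twoStarS n s - 1) - μ * u r ^ q = 0

/-- A positive radial solution of (E) on a set `I ⊆ (0,∞)`. -/
def IsRadialSol (n : ℕ) (s μ q : ℝ) (I : Set ℝ) (u : ℝ → ℝ) : Prop :=
  ContDiffOn ℝ 2 u I ∧ (∀ r ∈ I, 0 < u r) ∧ ∀ r ∈ I, radialEq n s μ q u r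

lemma aux_rpow_atTop {e : ℝ} (he : e < 0) :
    Tendsto (fun r : ℝ => r ^ e) (𝓝[>] (0:ℝ)) atTop := by
  have h1 : Tendsto (fun r : ℝ => (r⁻¹) ^ (-e)) (𝓝[>] (0:ℝ)) atTop :=
    (tendsto_rpow_atTop (by linarith)).comp tendsto_inv_nhdsGT_zero
  refine h1.congr' ?_
  filter_upwards [self_mem_nhdsWithin] with x (hx : (0:ℝ) < x)
  rw [Real.inv_rpow hx.le, ← Real.rpow_neg hx.le, neg_neg]

lemma aux_rpow_zero {e : ℝ} (he : 0 < e) :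
    Tendsto (fun r : ℝ => r ^ e) (𝓝[>] (0:ℝ)) (𝓝 0) := by
  have h1 := (Real.continuousAt_rpow_const 0 e (Or.inr he.le)).tendsto
  rw [Real.zero_rpow he.ne'] at h1
  exact h1.mono_left nhdsWithin_le_nhds

lemma aux_blowup (n : ℕ) (hn : 3 ≤ n) (b : ℝ) (hb : 0 < b) (c : ℝ) (hc : 0 < c)
    (u g : ℝ → ℝ) (hderiv : ∀ t ∈ Set.Ioc (0:ℝ) b, HasDerivAt u (g t) t)
    (hgc : ContinuousOn g (Set.Ioc (0:ℝ) b))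
    (hlow : ∀ t ∈ Set.Ioc (0:ℝ) b, c * t ^ ((1:ℝ) - n) ≤ g t)
    (γ : ℝ) (hγlim : Tendsto u (𝓝[>] (0:ℝ)) (𝓝 γ)) : False := by
  have hn3 : (3:ℝ) ≤ (n:ℝ) := by exact_mod_cast hn
  have key : ∀ r ∈ Set.Ioc (0:ℝ) b,
      u r ≤ u b - c * ((b ^ ((2:ℝ) - n) - r ^ ((2:ℝ) - n)) / ((2:ℝ) - n)) := by
    intro r hr
    have hrb : r ≤ b := hr.2
    have hsub : Set.uIcc r b ⊆ Set.Ioc (0:ℝ) b := by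
      rw [Set.uIcc_of_le hrb]; exact fun t ht => ⟨lt_of_lt_of_le hr.1 ht.1, ht.2⟩
    have h0nm : (0:ℝ) ∉ Set.uIcc r b := fun h => absurd (hsub h).1 (lt_irrefl 0)
    have hint : IntervalIntegrable g volume r b := (hgc.mono hsub).intervalIntegrable
    have hftc : ∫ t in r..b, g t = u b - u r :=
      integral_eq_sub_of_hasDerivAt (fun t ht => hderiv t (hsub ht)) hint
    have hint2 : IntervalIntegrable (fun t : ℝ => c * t ^ ((1:ℝ) - n)) volume r b :=
      (intervalIntegrable_rpow (Or.inr h0nm)).const_mul c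
    have hmono : (∫ t in r..b, c * t ^ ((1:ℝ) - n)) ≤ ∫ t in r..b, g t := by
      refine integral_mono_on hrb hint2 hint fun t ht => ?_
      exact hlow t ⟨lt_of_lt_of_le hr.1 ht.1, ht.2⟩
    have hval : (∫ t in r..b, c * t ^ ((1:ℝ) - n))
        = c * ((b ^ ((2:ℝ) - n) - r ^ ((2:ℝ) - n)) / ((2:ℝ) - n)) := by
      rw [intervalIntegral.integral_const_mul, integral_rpow (Or.inr ⟨by norm_num; linarith, h0nm⟩)]
      have he : (1:ℝ) - n + 1 = 2 - n := by ring
      rw [he]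
    rw [hval] at hmono
    rw [hftc] at hmono
    linarith
  have hneg : c / ((2:ℝ) - n) < 0 := div_neg_of_pos_of_neg hc (by linarith)
  have hbot : Tendsto (fun r : ℝ =>
      u b - c * ((b ^ ((2:ℝ) - n) - r ^ ((2:ℝ) - n)) / ((2:ℝ) - n))) (𝓝[>] (0:ℝ)) atBot := by
    have h2 : Tendsto (fun r : ℝ => (c / ((2:ℝ) - n)) * r ^ ((2:ℝ) - n)) (𝓝[>] (0:ℝ)) atBot :=
      (tendsto_const_mul_atBot_of_neg hneg).mpr (aux_rpow_atTop (by linarith))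
    have h3 := tendsto_atBot_add_const_left _ (u b - c * (b ^ ((2:ℝ) - n)) / ((2:ℝ) - n)) h2
    refine h3.congr fun r => ?_
    ring
  have hev1 : ∀ᶠ r in 𝓝[>] (0:ℝ), γ - 1 ≤ u r :=
    hγlim.eventually (eventually_ge_nhds (by linarith))
  have hev2 : ∀ᶠ r in 𝓝[>] (0:ℝ),
      u b - c * ((b ^ ((2:ℝ) - n) - r ^ ((2:ℝ) - n)) / ((2:ℝ) - n)) < γ - 1 :=
    hbot.eventually (eventually_lt_atBot (γ - 1))
  have hev3 : ∀ᶠ r in 𝓝[>] (0:ℝ), r ∈ Set.Ioc (0:ℝ) b :=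
    eventually_of_mem (Ioc_mem_nhdsGT hb) fun r hr => hr
  obtain ⟨r, h1, h2, h3⟩ := (hev1.and (hev2.and hev3)).exists
  have := key r h3
  linarith

theorem stmt1 (n : ℕ) (hn : 3 ≤ n) (s μ q : ℝ) (hs0 : 0 < s) (hs2 : s < 2)
    (hμ : 0 < μ) (hq : 1 < q) (R : ℝ) (hR : 0 < R) (u : ℝ → ℝ)
    (hu : IsRadialSol n s μ q (Set.Ioo 0 R) u)
    (γ : ℝ) (hγ : 0 < γ) (hlim : Tendsto u (𝓝[>] (0 : ℝ)) (𝓝 γ)) :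
    Tendsto (fun r : ℝ => r ^ ((n : ℝ) - 1) * deriv u r) (𝓝[>] (0 : ℝ)) (𝓝 0) ∧
    Tendsto (fun r : ℝ => r ^ (s - 1) * deriv u r) (𝓝[>] (0 : ℝ))
      (𝓝 (-(γ ^ (twoStarS n s - 1)) / ((n : ℝ) - s))) := by
  obtain ⟨hC2, hpos, heq⟩ := hu
  have hn3 : (3:ℝ) ≤ (n:ℝ) := by exact_mod_cast hn
  have hns : (0:ℝ) < (n:ℝ) - s := by linarith
  have hn2 : (0:ℝ) < (n:ℝ) - 2 := by linarith
  set p : ℝ := twoStarS n s - 1 with hpdef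
  have hp0 : 0 < p := by
    rw [hpdef, twoStarS]
    have : (1:ℝ) < 2 * ((n:ℝ) - s) / ((n:ℝ) - 2) := (one_lt_div hn2).mpr (by linarith)
    linarith
  -- regularity
  have hu' : ∀ r ∈ Set.Ioo (0:ℝ) R, HasDerivAt u (deriv u r) r := fun r hr =>
    ((hC2.differentiableOn (by norm_num)).differentiableAt (isOpen_Ioo.mem_nhds hr)).hasDerivAt
  have hd1 : ContDiffOn ℝ 1 (deriv u) (Set.Ioo 0 R) :=
    hC2.deriv_of_isOpen isOpen_Ioo (by norm_num)
  have hu'' : ∀ r ∈ Set.Ioo (0:ℝ) R, HasDerivAt (deriv u) (deriv (deriv u) r) r := fun r hr =>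
    ((hd1.differentiableOn (by norm_num)).differentiableAt (isOpen_Ioo.mem_nhds hr)).hasDerivAt
  have hUcont : ContinuousOn u (Set.Ioo 0 R) := hC2.continuousOn
  have hU'cont : ContinuousOn (deriv u) (Set.Ioo 0 R) := hd1.continuousOn
  -- choice of r1
  have hball : ∀ᶠ t in 𝓝[>] (0:ℝ), u t ∈ Set.Ioo (γ/2) (2*γ) :=
    hlim (Ioo_mem_nhds (by linarith) (by linarith))
  obtain ⟨b0, hb0, hb0sub⟩ := mem_nhdsGT_iff_exists_Ioc_subset.mp hball
  set r1 : ℝ := min b0 (R/2) with hr1def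
  have hr10 : 0 < r1 := lt_min hb0 (by linarith)
  have hr1R : r1 < R := lt_of_le_of_lt (min_le_right _ _) (by linarith)
  have hsub1 : Set.Ioc (0:ℝ) r1 ⊆ Set.Ioo 0 R := fun t ht =>
    ⟨ht.1, lt_of_le_of_lt ht.2 hr1R⟩
  have hbound : ∀ t ∈ Set.Ioc (0:ℝ) r1, γ/2 < u t ∧ u t < 2*γ := by
    intro t ht
    have := hb0sub ⟨ht.1, le_trans ht.2 (min_le_left _ _)⟩
    exact ⟨this.1, this.2⟩
  set F : ℝ → ℝ := fun r : ℝ => r ^ ((n : ℝ) - 1) * deriv u r with hFdef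
  set G : ℝ → ℝ :=
    fun r : ℝ => μ * r ^ ((n:ℝ) - 1) * u r ^ q - r ^ ((n:ℝ) - 1 - s) * u r ^ p with hGdef
  -- derivative of F is G
  have hF' : ∀ r ∈ Set.Ioo (0:ℝ) R, HasDerivAt F (G r) r := by
    intro r hr
    have hr0 : 0 < r := hr.1
    have hrpow : HasDerivAt (fun x : ℝ => x ^ ((n:ℝ) - 1)) (((n:ℝ)-1) * r ^ ((n:ℝ)-1-1)) r :=
      Real.hasDerivAt_rpow_const (Or.inl hr0.ne')
    have hmul := hrpow.mul (hu'' r hr)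
    have heqr := heq r hr
    rw [radialEq] at heqr
    have hdd : deriv (deriv u) r
        = μ * u r ^ q - r ^ (-s) * u r ^ p - (((n:ℝ)-1)/r) * deriv u r := by
      rw [← hpdef] at heqr; linarith
    have e1 : r ^ ((n:ℝ)-1-s) = r ^ ((n:ℝ)-1) * r ^ (-s) := by
      rw [← Real.rpow_add hr0]; ring_nf
    have e2 : r ^ ((n:ℝ)-1-1) = r ^ ((n:ℝ)-1) / r := Real.rpow_sub_one hr0.ne' _
    have hGr : G r = ((n:ℝ)-1) * r ^ ((n:ℝ)-1-1) * deriv u r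
        + r ^ ((n:ℝ)-1) * deriv (deriv u) r := by
      simp only [hGdef]
      rw [hdd, e1, e2]
      field_simp
      ring
    rw [hGr]
    exact hmul
  have hGcont : ContinuousOn G (Set.Ioo 0 R) := by
    rw [hGdef]
    apply ContinuousOn.sub
    · exact (continuousOn_const.mul (continuousOn_id.rpow_const fun x hx => Or.inr (by linarith))).mul
        (hUcont.rpow_const fun x hx => Or.inr (by linarith))
    · exact (continuousOn_id.rpow_const fun x hx => Or.inr (by linarith)).mul
        (hUcont.rpow_const fun x hx => Or.inr hp0.le)
  -- bound on G
  set C : ℝ := μ * r1 ^ s * (2*γ) ^ q + (2*γ) ^ p with hCdef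
  have hC0 : 0 < C := by
    rw [hCdef]
    have h1 : (0:ℝ) < r1 ^ s := Real.rpow_pos_of_pos hr10 s
    have h2 : (0:ℝ) < (2*γ) ^ q := Real.rpow_pos_of_pos (by linarith) q
    have h3 : (0:ℝ) < (2*γ) ^ p := Real.rpow_pos_of_pos (by linarith) p
    positivity
  have hGb : ∀ t ∈ Set.Ioc (0:ℝ) r1, |G t| ≤ C * t ^ ((n:ℝ) - 1 - s) := by
    intro t ht
    have ht0 : 0 < t := ht.1
    obtain ⟨hl, hup⟩ := hbound t ht
    have hu0 : (0:ℝ) ≤ u t := le_of_lt (lt_trans (by linarith) hl)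
    have h1 : u t ^ q ≤ (2*γ) ^ q := Real.rpow_le_rpow hu0 hup.le (by linarith)
    have h2 : u t ^ p ≤ (2*γ) ^ p := Real.rpow_le_rpow hu0 hup.le hp0.le
    have h3 : t ^ ((n:ℝ)-1) ≤ r1 ^ s * t ^ ((n:ℝ)-1-s) := by
      have e3 : t ^ ((n:ℝ)-1) = t ^ s * t ^ ((n:ℝ)-1-s) := by
        rw [← Real.rpow_add ht0]; ring_nf
      rw [e3]
      exact mul_le_mul_of_nonneg_right (Real.rpow_le_rpow ht0.le ht.2 hs0.le)
        (Real.rpow_nonneg ht0.le _)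
    have hT0 : (0:ℝ) ≤ t ^ ((n:ℝ)-1-s) := Real.rpow_nonneg ht0.le _
    have hq0 : (0:ℝ) ≤ u t ^ q := Real.rpow_nonneg hu0 _
    have hp0' : (0:ℝ) ≤ u t ^ p := Real.rpow_nonneg hu0 _
    have ht10 : (0:ℝ) ≤ r1 ^ s := Real.rpow_nonneg hr10.le _
    have htn0 : (0:ℝ) ≤ t ^ ((n:ℝ)-1) := Real.rpow_nonneg ht0.le _
    have hA : μ * t ^ ((n:ℝ)-1) * u t ^ q ≤ μ * r1 ^ s * (2*γ) ^ q * t ^ ((n:ℝ)-1-s) := by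
      have := mul_le_mul (mul_le_mul_of_nonneg_left h3 hμ.le) h1 hq0
        (by positivity)
      nlinarith [this]
    have hB : t ^ ((n:ℝ)-1-s) * u t ^ p ≤ (2*γ) ^ p * t ^ ((n:ℝ)-1-s) := by
      rw [mul_comm ((2*γ) ^ p)]
      exact mul_le_mul_of_nonneg_left h2 hT0
    have hA0 : (0:ℝ) ≤ μ * t ^ ((n:ℝ)-1) * u t ^ q := by positivity
    have hB0 : (0:ℝ) ≤ t ^ ((n:ℝ)-1-s) * u t ^ p := by positivity
    have hexp : (μ * r1 ^ s * (2*γ) ^ q + (2*γ) ^ p) * t ^ ((n:ℝ)-1-s)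
        = μ * r1 ^ s * (2*γ) ^ q * t ^ ((n:ℝ)-1-s) + (2*γ) ^ p * t ^ ((n:ℝ)-1-s) := by ring
    have hM1 : (0:ℝ) ≤ μ * r1 ^ s * (2*γ) ^ q * t ^ ((n:ℝ)-1-s) := by positivity
    have hM2 : (0:ℝ) ≤ (2*γ) ^ p * t ^ ((n:ℝ)-1-s) := by positivity
    simp only [hGdef, hCdef]
    rw [abs_le]
    constructor
    · linarith [hB, hA0, hexp, hM1]
    · linarith [hA, hB0, hexp, hM2]
  -- integrability
  have hIntPow : ∀ r : ℝ, 0 < r →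
      IntegrableOn (fun t : ℝ => t ^ ((n:ℝ)-1-s)) (Set.Ioc 0 r) volume := by
    intro r hr
    have := intervalIntegrable_rpow' (a := 0) (b := r) (r := (n:ℝ)-1-s) (by linarith)
    exact this.1
  have hGint : IntegrableOn G (Set.Ioc 0 r1) volume := by
    apply Integrable.mono' (((hIntPow r1 hr10).const_mul C))
    · exact ((hGcont.mono hsub1).aestronglyMeasurable measurableSet_Ioc)
    · refine (ae_restrict_iff' measurableSet_Ioc).mpr (ae_of_all _ fun t ht => ?_)
      simpa [Real.norm_eq_abs] using hGb t ht
  have hGintOn : ∀ r ∈ Set.Ioc (0:ℝ) r1, IntegrableOn G (Set.Ioc 0 r) volume := fun r hr =>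
    hGint.mono_set (Set.Ioc_subset_Ioc_right hr.2)
  have hFTC : ∀ r ∈ Set.Ioc (0:ℝ) r1, F r1 - F r = ∫ t in Set.Ioc r r1, G t := by
    intro r hr
    have hsub2 : Set.uIcc r r1 ⊆ Set.Ioo 0 R := by
      rw [Set.uIcc_of_le hr.2]
      exact fun t ht => ⟨lt_of_lt_of_le hr.1 ht.1, lt_of_le_of_lt ht.2 hr1R⟩
    have hii : IntervalIntegrable G volume r r1 := by
      rw [intervalIntegrable_iff_integrableOn_Ioc_of_le hr.2]
      exact hGint.mono_set (Set.Ioc_subset_Ioc_left hr.1.le)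
    have h := integral_eq_sub_of_hasDerivAt (fun t ht => hF' t (hsub2 ht)) hii
    rw [intervalIntegral.integral_of_le hr.2] at h
    exact h.symm
  set L : ℝ := F r1 - ∫ t in Set.Ioc (0:ℝ) r1, G t with hLdef
  have hform : ∀ r ∈ Set.Ioc (0:ℝ) r1, F r = L + ∫ t in Set.Ioc (0:ℝ) r, G t := by
    intro r hr
    have h1 := hFTC r hr
    have h2 : (∫ t in Set.Ioc (0:ℝ) r1, G t)
        = (∫ t in Set.Ioc (0:ℝ) r, G t) + ∫ t in Set.Ioc r r1, G t := by
      rw [← Set.Ioc_union_Ioc_eq_Ioc hr.1.le hr.2]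
      exact setIntegral_union (Set.Ioc_disjoint_Ioc_of_le le_rfl) measurableSet_Ioc
        (hGintOn r hr) (hGint.mono_set (Set.Ioc_subset_Ioc_left hr.1.le))
    rw [hLdef]
    linarith
  have hIocPow : ∀ r : ℝ, 0 < r →
      (∫ t in Set.Ioc (0:ℝ) r, t ^ ((n:ℝ)-1-s)) = r ^ ((n:ℝ)-s) / ((n:ℝ)-s) := by
    intro r hr
    rw [← intervalIntegral.integral_of_le hr.le,
      integral_rpow (Or.inl (by linarith : (-1:ℝ) < (n:ℝ)-1-s))]
    have he : (n:ℝ)-1-s+1 = (n:ℝ)-s := by ring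
    rw [he, Real.zero_rpow hns.ne', sub_zero]
  have htailb : ∀ r ∈ Set.Ioc (0:ℝ) r1,
      |∫ t in Set.Ioc (0:ℝ) r, G t| ≤ C * (r ^ ((n:ℝ)-s) / ((n:ℝ)-s)) := by
    intro r hr
    have h1 : ‖∫ t in Set.Ioc (0:ℝ) r, G t‖ ≤ ∫ t in Set.Ioc (0:ℝ) r, C * t ^ ((n:ℝ)-1-s) := by
      refine norm_integral_le_of_norm_le ((hIntPow r hr.1).const_mul C) ?_
      refine (ae_restrict_iff' measurableSet_Ioc).mpr (ae_of_all _ fun t ht => ?_)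
      simpa [Real.norm_eq_abs] using hGb t ⟨ht.1, le_trans ht.2 hr.2⟩
    rw [MeasureTheory.integral_const_mul, hIocPow r hr.1] at h1
    rwa [Real.norm_eq_abs] at h1
  have htail0 : Tendsto (fun r : ℝ => ∫ t in Set.Ioc (0:ℝ) r, G t) (𝓝[>] (0:ℝ)) (𝓝 0) := by
    refine squeeze_zero_norm' (a := fun r : ℝ => C * (r ^ ((n:ℝ)-s) / ((n:ℝ)-s))) ?_ ?_
    · filter_upwards [Ioc_mem_nhdsGT hr10] with r hr
      rw [Real.norm_eq_abs]
      exact htailb r hr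
    · have h4 := aux_rpow_zero hns
      have h5 := (h4.div_const ((n:ℝ)-s)).const_mul C
      simpa using h5
  have hFtend : Tendsto F (𝓝[>] (0:ℝ)) (𝓝 L) := by
    have h5 : Tendsto (fun r : ℝ => L + ∫ t in Set.Ioc (0:ℝ) r, G t) (𝓝[>] (0:ℝ)) (𝓝 (L + 0)) :=
      tendsto_const_nhds.add htail0
    rw [add_zero] at h5
    refine h5.congr' ?_
    filter_upwards [Ioc_mem_nhdsGT hr10] with r hr
    exact (hform r hr).symm
  have hL0 : L = 0 := by
    by_contra hL
    rcases lt_or_gt_of_ne hL with hLneg | hLpos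
    · have hev : ∀ᶠ r in 𝓝[>] (0:ℝ), F r < L/2 := hFtend.eventually_lt_const (by linarith)
      obtain ⟨b, hbmem, hbsub⟩ := mem_nhdsGT_iff_exists_Ioc_subset.mp
        (hev.and (eventually_of_mem (Ioc_mem_nhdsGT hr10) fun x h => h))
      refine aux_blowup n hn b hbmem (-(L/2)) (by linarith) (fun t => -(u t))
        (fun t => -(deriv u t)) ?_ ?_ ?_ (-γ) hlim.neg
      · intro t ht
        exact (hu' t (hsub1 (hbsub ht).2)).neg
      · exact (hU'cont.mono fun t ht => hsub1 (hbsub ht).2).neg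
      · intro t ht
        obtain ⟨hFt, htmem⟩ := hbsub ht
        have ht0 : 0 < t := ht.1
        have hpowpos : 0 < t ^ ((1:ℝ)-(n:ℝ)) := Real.rpow_pos_of_pos ht0 _
        have hid : deriv u t = t ^ ((1:ℝ)-(n:ℝ)) * F t := by
          have e5 : t ^ ((1:ℝ)-(n:ℝ)) * t ^ ((n:ℝ)-1) = 1 := by
            rw [← Real.rpow_add ht0]; norm_num
          simp only [hFdef]
          rw [← mul_assoc, e5, one_mul]
        show -(L/2) * t ^ ((1:ℝ)-(n:ℝ)) ≤ -(deriv u t)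
        rw [hid, show -(t ^ ((1:ℝ)-(n:ℝ)) * F t) = t ^ ((1:ℝ)-(n:ℝ)) * (-(F t)) by ring,
          show -(L/2) * t ^ ((1:ℝ)-(n:ℝ)) = t ^ ((1:ℝ)-(n:ℝ)) * (-(L/2)) by ring]
        exact mul_le_mul_of_nonneg_left (by linarith) hpowpos.le
    · have hev : ∀ᶠ r in 𝓝[>] (0:ℝ), L/2 < F r := hFtend.eventually_const_lt (by linarith)
      obtain ⟨b, hbmem, hbsub⟩ := mem_nhdsGT_iff_exists_Ioc_subset.mp
        (hev.and (eventually_of_mem (Ioc_mem_nhdsGT hr10) fun x h => h))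
      refine aux_blowup n hn b hbmem (L/2) (by linarith) u (deriv u) ?_ ?_ ?_ γ hlim
      · intro t ht
        exact hu' t (hsub1 (hbsub ht).2)
      · exact hU'cont.mono fun t ht => hsub1 (hbsub ht).2
      · intro t ht
        obtain ⟨hFt, htmem⟩ := hbsub ht
        have ht0 : 0 < t := ht.1
        have hpowpos : 0 < t ^ ((1:ℝ)-(n:ℝ)) := Real.rpow_pos_of_pos ht0 _
        have hid : deriv u t = t ^ ((1:ℝ)-(n:ℝ)) * F t := by
          have e5 : t ^ ((1:ℝ)-(n:ℝ)) * t ^ ((n:ℝ)-1) = 1 := by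
            rw [← Real.rpow_add ht0]; norm_num
          simp only [hFdef]
          rw [← mul_assoc, e5, one_mul]
        show L/2 * t ^ ((1:ℝ)-(n:ℝ)) ≤ deriv u t
        rw [hid, show L/2 * t ^ ((1:ℝ)-(n:ℝ)) = t ^ ((1:ℝ)-(n:ℝ)) * (L/2) by ring]
        exact mul_le_mul_of_nonneg_left hFt.le hpowpos.le
  have hpart1 : Tendsto F (𝓝[>] (0:ℝ)) (𝓝 0) := hL0 ▸ hFtend
  refine ⟨hpart1, ?_⟩
  have hφ : Tendsto (fun t : ℝ => μ * t ^ s * u t ^ q - u t ^ p) (𝓝[>] (0:ℝ))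
      (𝓝 (-(γ ^ p))) := by
    have hts := aux_rpow_zero hs0
    have huq : Tendsto (fun t : ℝ => u t ^ q) (𝓝[>] (0:ℝ)) (𝓝 (γ ^ q)) :=
      ((Real.continuousAt_rpow_const γ q (Or.inl hγ.ne')).tendsto).comp hlim
    have hup : Tendsto (fun t : ℝ => u t ^ p) (𝓝[>] (0:ℝ)) (𝓝 (γ ^ p)) :=
      ((Real.continuousAt_rpow_const γ p (Or.inl hγ.ne')).tendsto).comp hlim
    have h8 := (((tendsto_const_nhds : Tendsto (fun _ : ℝ => μ) (𝓝[>] (0:ℝ)) (𝓝 μ)).mul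
      hts).mul huq).sub hup
    simpa using h8
  have key2 : Tendsto (fun r : ℝ => r ^ (s - (n:ℝ)) * F r) (𝓝[>] (0:ℝ))
      (𝓝 (-(γ ^ p) / ((n:ℝ) - s))) := by
    rw [Metric.tendsto_nhds]
    intro ε hε
    have hε'0 : 0 < ε * ((n:ℝ) - s) / 2 := by positivity
    set ε' := ε * ((n:ℝ) - s) / 2 with hε'def
    have heps : ∀ᶠ t in 𝓝[>] (0:ℝ), |μ * t ^ s * u t ^ q - u t ^ p + γ ^ p| ≤ ε' := by
      filter_upwards [Metric.tendsto_nhds.mp hφ ε' hε'0] with t h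
      rw [Real.dist_eq, sub_neg_eq_add] at h
      exact h.le
    obtain ⟨b, hbmem, hbsub⟩ := mem_nhdsGT_iff_exists_Ioc_subset.mp
      (heps.and (eventually_of_mem (Ioc_mem_nhdsGT hr10) fun x h => h))
    filter_upwards [Ioc_mem_nhdsGT (hbmem : (0:ℝ) < b)] with r hrIoc
    have hrr1 : r ∈ Set.Ioc (0:ℝ) r1 := (hbsub hrIoc).2
    have hr0 : 0 < r := hrIoc.1
    have hH : ∀ t ∈ Set.Ioc (0:ℝ) r,
        |G t + γ ^ p * t ^ ((n:ℝ)-1-s)| ≤ ε' * t ^ ((n:ℝ)-1-s) := by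
      intro t ht
      have htb : t ∈ Set.Ioc (0:ℝ) b := ⟨ht.1, le_trans ht.2 hrIoc.2⟩
      obtain ⟨hφt, -⟩ := hbsub htb
      have ht0 : 0 < t := ht.1
      have e3 : t ^ ((n:ℝ)-1-s) * t ^ s = t ^ ((n:ℝ)-1) := by
        rw [← Real.rpow_add ht0]; ring_nf
      have hGre : G t + γ ^ p * t ^ ((n:ℝ)-1-s)
          = t ^ ((n:ℝ)-1-s) * (μ * t ^ s * u t ^ q - u t ^ p + γ ^ p) := by
        simp only [hGdef]
        rw [← e3]; ring
      rw [hGre, abs_mul, abs_of_nonneg (Real.rpow_nonneg ht0.le _), mul_comm ε']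
      exact mul_le_mul_of_nonneg_left hφt (Real.rpow_nonneg ht0.le _)
    have hFr : F r = ∫ t in Set.Ioc (0:ℝ) r, G t := by
      rw [hform r hrr1, hL0, zero_add]
    have hint1 : IntegrableOn G (Set.Ioc 0 r) volume := hGintOn r hrr1
    have hint2 : IntegrableOn (fun t : ℝ => γ ^ p * t ^ ((n:ℝ)-1-s)) (Set.Ioc 0 r) volume :=
      (hIntPow r hr0).const_mul _
    have hHint : (∫ t in Set.Ioc (0:ℝ) r, (G t + γ ^ p * t ^ ((n:ℝ)-1-s)))
        = F r + γ ^ p * (r ^ ((n:ℝ)-s) / ((n:ℝ)-s)) := by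
      rw [integral_add hint1 hint2, MeasureTheory.integral_const_mul, hIocPow r hr0, hFr]
    have hHb : |F r + γ ^ p * (r ^ ((n:ℝ)-s) / ((n:ℝ)-s))|
        ≤ ε' * (r ^ ((n:ℝ)-s) / ((n:ℝ)-s)) := by
      rw [← hHint]
      have h1 : ‖∫ t in Set.Ioc (0:ℝ) r, (G t + γ ^ p * t ^ ((n:ℝ)-1-s))‖
          ≤ ∫ t in Set.Ioc (0:ℝ) r, ε' * t ^ ((n:ℝ)-1-s) := by
        refine norm_integral_le_of_norm_le ((hIntPow r hr0).const_mul ε') ?_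
        refine (ae_restrict_iff' measurableSet_Ioc).mpr (ae_of_all _ fun t ht => ?_)
        simpa [Real.norm_eq_abs] using hH t ht
      rw [MeasureTheory.integral_const_mul, hIocPow r hr0] at h1
      rwa [Real.norm_eq_abs] at h1
    rw [Real.dist_eq]
    have hrp : 0 < r ^ (s-(n:ℝ)) := Real.rpow_pos_of_pos hr0 _
    have e4 : r ^ (s-(n:ℝ)) * r ^ ((n:ℝ)-s) = 1 := by
      rw [← Real.rpow_add hr0]; norm_num
    have hid2 : r ^ (s-(n:ℝ)) * F r - (-(γ ^ p) / ((n:ℝ)-s))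
        = r ^ (s-(n:ℝ)) * (F r + γ ^ p * (r ^ ((n:ℝ)-s) / ((n:ℝ)-s))) := by
      have h6 : r ^ (s-(n:ℝ)) * (γ ^ p * (r ^ ((n:ℝ)-s) / ((n:ℝ)-s)))
          = γ ^ p / ((n:ℝ)-s) := by
        rw [show r ^ (s-(n:ℝ)) * (γ ^ p * (r ^ ((n:ℝ)-s) / ((n:ℝ)-s)))
            = (r ^ (s-(n:ℝ)) * r ^ ((n:ℝ)-s)) * γ ^ p / ((n:ℝ)-s) by ring, e4, one_mul]
      rw [mul_add, h6]; ring
    rw [hid2, abs_mul, abs_of_nonneg hrp.le]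
    calc r ^ (s-(n:ℝ)) * |F r + γ ^ p * (r ^ ((n:ℝ)-s) / ((n:ℝ)-s))|
        ≤ r ^ (s-(n:ℝ)) * (ε' * (r ^ ((n:ℝ)-s) / ((n:ℝ)-s))) :=
          mul_le_mul_of_nonneg_left hHb hrp.le
      _ = ε' / ((n:ℝ)-s) := by
          rw [show r ^ (s-(n:ℝ)) * (ε' * (r ^ ((n:ℝ)-s) / ((n:ℝ)-s)))
              = (r ^ (s-(n:ℝ)) * r ^ ((n:ℝ)-s)) * ε' / ((n:ℝ)-s) by ring, e4, one_mul]
      _ < ε := by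
          rw [hε'def]
          have h7 : ε * ((n:ℝ)-s) / 2 / ((n:ℝ)-s) = ε / 2 := by
            field_simp
          rw [h7]
          linarith
  refine key2.congr' ?_
  filter_upwards [self_mem_nhdsWithin] with r (hr : (0:ℝ) < r)
  simp only [hFdef]
  rw [← mul_assoc, ← Real.rpow_add hr]
  have h9 : s - (n:ℝ) + ((n:ℝ) - 1) = s - 1 := by ring
  rw [h9]

end
end

section
/- Let 1 < q < 2* − 1 and R > 0. There is no function u ∈ C²((0,R]) with u > 0 on (0,R), u(R) = 0, satisfying the equation u''(r) + ((n−1)/r)·u'(r) + r^{−s}·u(r)^{2*(s)−1} − μ·u(r)^q = 0 for all r ∈ (0,R), and such that limsup_{r→0⁺} r^{(n−2)/2} u(r) < ∞. (This is the radial form, on a ball, of the nonexistence of positive smooth solutions of the Dirichlet problem −Δu = |x|^{−s}u^{2*(s)−1} − μu^q in Ω∖{0}, u = 0 on ∂Ω, for star-shaped Ω, among solutions that are not of (ND) type.) -/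
open Filter Set Real
open scoped Topology ENNReal

noncomputable section

/-- The critical Sobolev exponent `2* = 2n/(n-2)`. -/
def twoStar (n : ℕ) : ℝ := 2 * (n : ℝ) / ((n : ℝ) - 2)

/-- `limsup_{r→0⁺} r^{(n-2)/2} u(r) < ∞`, phrased via the `ℝ≥0∞`-valued limsup. -/
def UpliBound (n : ℕ) (u : ℝ → ℝ) : Prop :=
  Filter.limsup (fun r : ℝ => ENNReal.ofReal (r ^ (((n : ℝ) - 2) / 2) * u r))
    (𝓝[>] (0 : ℝ)) < ⊤

private lemma aux_slope (f f' : ℝ → ℝ) (a b k : ℝ) (hab : a ≤ b)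
    (hf : ∀ x, x ∈ Icc a b → HasDerivAt f (f' x) x)
    (hk : ∀ x, x ∈ Icc a b → f' x ≤ k) : f b - f a ≤ k * (b - a) := by
  rcases eq_or_lt_of_le hab with rfl | hab'
  · simp
  have hlin : ∀ x : ℝ, HasDerivAt (fun t => k * t) k x := by
    intro x
    simpa using (hasDerivAt_id x).const_mul k
  have h1 : AntitoneOn (fun t => f t - k * t) (Icc a b) := by
    apply antitoneOn_of_deriv_nonpos (convex_Icc a b)
    · exact fun x hx => ((hf x hx).sub (hlin x)).continuousAt.continuousWithinAt
    · intro x hx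
      rw [interior_Icc] at hx
      exact ((hf x (Ioo_subset_Icc_self hx)).sub (hlin x)).differentiableAt.differentiableWithinAt
    · intro x hx
      rw [interior_Icc] at hx
      change deriv (f - fun t => k * t) x ≤ 0
      rw [((hf x (Ioo_subset_Icc_self hx)).sub (hlin x)).deriv]
      have := hk x (Ioo_subset_Icc_self hx); linarith
  have := h1 (left_mem_Icc.mpr hab) (right_mem_Icc.mpr hab) hab
  simp only at this
  linarith

private lemma aux_slope_ge (f f' : ℝ → ℝ) (a b k : ℝ) (hab : a ≤ b)
    (hf : ∀ x, x ∈ Icc a b → HasDerivAt f (f' x) x)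
    (hk : ∀ x, x ∈ Icc a b → k ≤ f' x) : k * (b - a) ≤ f b - f a := by
  have := aux_slope (fun t => -f t) (fun t => -f' t) a b (-k) hab
    (fun x hx => (hf x hx).neg) (fun x hx => by have := hk x hx; linarith)

  linarith

set_option maxHeartbeats 2000000 in
private lemma aux_core (α p μ q δ e₀ M T₀ t₀ : ℝ) (v v₁ v₂ : ℝ → ℝ)
    (hα : 0 < α) (hp : 2 < p) (hμ : 0 < μ) (hq : 0 ≤ q) (hδ : 0 < δ)
    (ht₀ : T₀ < t₀) (he₀ : 0 < e₀)
    (hv : ∀ t, T₀ < t → HasDerivAt v (v₁ t) t)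
    (hv1 : ∀ t, T₀ < t → HasDerivAt v₁ (v₂ t) t)
    (hv2 : ∀ t, T₀ < t → v₂ t = α^2 * v t - v t ^ (p-1) + μ * Real.exp (-(δ*t)) * v t ^ q)
    (hpos : ∀ t, T₀ < t → 0 < v t)
    (hM : ∀ t, t₀ ≤ t → v t ≤ M)
    (hE : ∀ t, t₀ ≤ t → e₀ ≤ v₁ t^2/2 - α^2*(v t)^2/2 + (v t)^p/p
      - μ*Real.exp (-(δ*t))*(v t)^(q+1)/(q+1)) : False := by
  have hp2 : (0:ℝ) < p - 2 := by linarith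
  have hppos : (0:ℝ) < p := by linarith
  have hα2 : (0:ℝ) < α^2 := by positivity
  set K : ℝ := p*α^2/2 with hK
  have hKpos : 0 < K := by positivity
  set vb : ℝ := K ^ (1/(p-2)) with hvb
  have hvbpos : 0 < vb := Real.rpow_pos_of_pos hKpos _
  have hvbpow : vb ^ (p-2) = K := by
    rw [hvb, ← Real.rpow_mul hKpos.le, one_div, inv_mul_cancel₀ hp2.ne', Real.rpow_one]
  have hKα : α^2 < K := by rw [hK]; nlinarith
  set m : ℝ := vb*(K - α^2) with hm_def
  have hm : 0 < m := mul_pos hvbpos (by linarith)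
  have hMpos : 0 < M := lt_of_lt_of_le (hpos t₀ ht₀) (hM t₀ le_rfl)
  have hMq : 0 < M ^ q := Real.rpow_pos_of_pos hMpos q
  set T₂ : ℝ := max t₀ (Real.log (2*μ*M^q/m)/δ) with hT₂
  have hT₂t₀ : t₀ ≤ T₂ := le_max_left _ _
  have hT₂T₀ : T₀ < T₂ := lt_of_lt_of_le ht₀ hT₂t₀
  have hgt : ∀ {x : ℝ}, T₂ ≤ x → T₀ < x := fun hx => lt_of_lt_of_le hT₂T₀ hx
  have hsmall : ∀ t, T₂ ≤ t → μ * Real.exp (-(δ*t)) * M^q ≤ m/2 := by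
    intro t ht
    have h1 : Real.log (2*μ*M^q/m)/δ ≤ t := le_trans (le_max_right _ _) ht
    have h2 : Real.log (2*μ*M^q/m) ≤ δ*t := by
      rw [div_le_iff₀ hδ] at h1; linarith
    have h3 : Real.exp (-(δ*t)) ≤ m/(2*μ*M^q) := by
      have h4 : Real.exp (-(δ*t)) ≤ Real.exp (-(Real.log (2*μ*M^q/m))) :=
        Real.exp_le_exp.mpr (by linarith)
      have h5 : Real.exp (-(Real.log (2*μ*M^q/m))) = m/(2*μ*M^q) := by
        rw [Real.exp_neg, Real.exp_log (by positivity), inv_div]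
      linarith
    have h5 : μ * Real.exp (-(δ*t)) * M^q ≤ μ * (m/(2*μ*M^q)) * M^q := by
      gcongr
    calc μ * Real.exp (-(δ*t)) * M^q ≤ μ * (m/(2*μ*M^q)) * M^q := h5
      _ = m/2 := by field_simp
  -- F1
  have hF1 : ∀ t, t₀ ≤ t → v t ≤ vb → 2*e₀ ≤ v₁ t^2 := by
    intro t ht hle
    have hv0 := hpos t (lt_of_lt_of_le ht₀ ht)
    have hE' := hE t ht
    have hG : 0 ≤ μ*Real.exp (-(δ*t))*(v t)^(q+1)/(q+1) := by positivity
    have h1 : (v t)^(p-2) ≤ K := by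
      rw [← hvbpow]; exact Real.rpow_le_rpow hv0.le hle hp2.le
    have h2 : (v t)^p = (v t)^(p-2) * (v t)^2 := by
      rw [← Real.rpow_natCast (v t) 2, ← Real.rpow_add hv0]
      congr 1; push_cast; ring
    have h3 : (v t)^p ≤ K * (v t)^2 := by
      rw [h2]; exact mul_le_mul_of_nonneg_right h1 (by positivity)
    have h4 : (v t)^p / p ≤ α^2*(v t)^2/2 := by
      rw [div_le_iff₀ hppos]
      calc (v t)^p ≤ K * (v t)^2 := h3
        _ = α^2*(v t)^2/2*p := by rw [hK]; ring
    linarith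
  -- F2
  have hF2 : ∀ t, T₂ ≤ t → vb ≤ v t → v₂ t ≤ -(m/2) := by
    intro t ht hge
    have hT0t : T₀ < t := hgt ht
    have hv0 := hpos t hT0t
    rw [hv2 t hT0t]
    have h1 : v t ^ (p-1) = v t ^ (1:ℝ) * v t^(p-2) := by
      rw [← Real.rpow_add hv0]; congr 1; ring
    have h2 : K ≤ v t^(p-2) := by
      rw [← hvbpow]; exact Real.rpow_le_rpow hvbpos.le hge hp2.le
    have h3 : α^2 * v t - v t^(p-1) ≤ -m := by
      have h6 : vb * (K - α^2) ≤ v t * (v t^(p-2) - α^2) :=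
        mul_le_mul hge (by linarith) (by linarith) (le_trans hvbpos.le hge)
      rw [h1, Real.rpow_one, hm_def]
      nlinarith [h6]
    have h4 : μ * Real.exp (-(δ*t)) * v t ^ q ≤ m/2 := by
      refine le_trans ?_ (hsmall t ht)
      have h7 : v t ^ q ≤ M ^ q :=
        Real.rpow_le_rpow hv0.le (hM t (le_trans hT₂t₀ ht)) hq
      exact mul_le_mul_of_nonneg_left h7 (by positivity)
    linarith
  -- Step 1
  have hstep1 : ∀ T, T₂ ≤ T → ∃ t, T ≤ t ∧ v t < vb := by
    intro T hT
    by_contra hcon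
    push_neg at hcon
    have hTT₀ : T₀ < T := hgt hT
    -- v₁ decreases with slope ≤ -m/2 beyond T
    have hdec : ∀ t, T ≤ t → v₁ t ≤ v₁ T - m/2*(t-T) := by
      intro t ht
      have := aux_slope v₁ v₂ T t (-(m/2)) ht
        (fun x hx => hv1 x (lt_of_lt_of_le hTT₀ hx.1))
        (fun x hx => hF2 x (le_trans hT hx.1) (hcon x hx.1))
      nlinarith
    set T₃ : ℝ := max T (T + (2/m)*(v₁ T + 1)) with hT₃def
    have hTT₃ : T ≤ T₃ := le_max_left _ _
    have hT₃neg : ∀ t, T₃ ≤ t → v₁ t ≤ -1 := by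
      intro t ht
      have h1 : T + (2/m)*(v₁ T + 1) ≤ t := le_trans (le_max_right _ _) ht
      have h2 := hdec t (le_trans hTT₃ ht)
      have h3 : (2/m)*(v₁ T + 1) ≤ t - T := by linarith
      have h4 : v₁ T + 1 ≤ m/2*(t-T) := by
        have h5 : m/2*((2/m)*(v₁ T + 1)) ≤ m/2*(t-T) :=
          mul_le_mul_of_nonneg_left h3 (by positivity)
        calc v₁ T + 1 = m/2*((2/m)*(v₁ T + 1)) := by field_simp
          _ ≤ m/2*(t-T) := h5
      linarith
    have hvT₃pos : 0 < v T₃ := hpos T₃ (lt_of_lt_of_le hTT₀ hTT₃)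
    set t₆ : ℝ := T₃ + v T₃ with ht₆def
    have h7 : v t₆ - v T₃ ≤ -1 * (t₆ - T₃) := by
      apply aux_slope v v₁ T₃ t₆ (-1) (by linarith)
        (fun x hx => hv x (lt_of_lt_of_le hTT₀ (le_trans hTT₃ hx.1)))
        (fun x hx => hT₃neg x hx.1)
    have h8 : v t₆ ≤ 0 := by
      have : t₆ - T₃ = v T₃ := by rw [ht₆def]; ring
      nlinarith
    exact absurd (hpos t₆ (lt_of_lt_of_le hTT₀ (by linarith))) (by linarith)
  -- abbreviations
  have hs2pos : 0 < Real.sqrt (2*e₀) := Real.sqrt_pos.mpr (by linarith)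
  set s2 : ℝ := Real.sqrt (2*e₀) with hs2def
  have habs : ∀ t, t₀ ≤ t → v t ≤ vb → s2 ≤ |v₁ t| := by
    intro t ht hle
    have h := hF1 t ht hle
    calc s2 ≤ Real.sqrt (v₁ t^2) := Real.sqrt_le_sqrt h
      _ = |v₁ t| := Real.sqrt_sq_eq_abs _
  have hcpos : 0 < Real.sqrt e₀ := Real.sqrt_pos.mpr he₀
  set c : ℝ := Real.sqrt e₀ with hcdef
  have hcs2 : c < s2 := Real.sqrt_lt_sqrt he₀.le (by linarith)
  -- produce a time with v ≤ vb and v₁ < 0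
  have hkey : ∃ t₅, T₂ ≤ t₅ ∧ v t₅ ≤ vb ∧ v₁ t₅ < 0 := by
    by_contra hcon
    push_neg at hcon
    have hup : ∀ t, T₂ ≤ t → v t ≤ vb → s2 ≤ v₁ t := by
      intro t ht hle
      have h0 := hcon t ht hle
      have h1 := habs t (le_trans hT₂t₀ ht) hle
      rwa [abs_of_nonneg h0] at h1
    obtain ⟨t₁, ht₁, hvt₁⟩ := hstep1 T₂ le_rfl
    have h2b : ∃ τ, t₁ ≤ τ ∧ vb < v τ := by
      by_contra h2b'
      push_neg at h2b'
      set t₇ : ℝ := t₁ + (vb + 1)/s2 with ht₇def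
      have ht₇ : t₁ ≤ t₇ := by
        rw [ht₇def]
        have : 0 < (vb+1)/s2 := by positivity
        linarith
      have hgrow := aux_slope_ge v v₁ t₁ t₇ s2 ht₇
        (fun x hx => hv x (hgt (le_trans ht₁ hx.1)))
        (fun x hx => hup x (le_trans ht₁ hx.1) (h2b' x hx.1))
      have heq7 : t₇ - t₁ = (vb+1)/s2 := by rw [ht₇def]; ring
      rw [heq7] at hgrow
      have h9 : s2 * ((vb+1)/s2) = vb + 1 := by field_simp
      have h10 := h2b' t₇ ht₇
      have h11 := hpos t₁ (hgt ht₁)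
      linarith
    obtain ⟨τ₀, hτ₀t₁, hτ₀⟩ := h2b
    have hT₂τ₀ : T₂ ≤ τ₀ := le_trans ht₁ hτ₀t₁
    obtain ⟨t₆, ht₆τ₀, hvt₆⟩ := hstep1 τ₀ hT₂τ₀
    set C : Set ℝ := Icc τ₀ t₆ ∩ v ⁻¹' (Iic vb) with hCdef
    have hvcont : ContinuousOn v (Icc τ₀ t₆) := fun x hx =>
      (hv x (hgt (le_trans hT₂τ₀ hx.1))).continuousAt.continuousWithinAt
    have hCclosed : IsClosed C :=
      hvcont.preimage_isClosed_of_isClosed isClosed_Icc isClosed_Iic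
    have hCne : C.Nonempty := ⟨t₆, ⟨ht₆τ₀, le_rfl⟩, le_of_lt hvt₆⟩
    have hCbdd : BddBelow C := ⟨τ₀, fun x hx => hx.1.1⟩
    set t₅ : ℝ := sInf C with ht₅def
    have ht₅C : t₅ ∈ C := hCclosed.csInf_mem hCne hCbdd
    have ht₅Icc : t₅ ∈ Icc τ₀ t₆ := ht₅C.1
    have hvt₅ : v t₅ ≤ vb := ht₅C.2
    have hτ₀t₅ : τ₀ < t₅ := by
      rcases eq_or_lt_of_le ht₅Icc.1 with h | h
      · exfalso; rw [← h] at hvt₅; exact absurd hvt₅ (not_le.mpr hτ₀)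
      · exact h
    have habove : ∀ x, τ₀ ≤ x → x < t₅ → vb < v x := by
      intro x hx1 hx2
      by_contra hle
      push_neg at hle
      have hxC : x ∈ C := ⟨⟨hx1, le_trans hx2.le ht₅Icc.2⟩, hle⟩
      exact absurd (csInf_le hCbdd hxC) (not_le.mpr hx2)
    have hanti : StrictAntiOn v₁ (Icc τ₀ t₅) := by
      apply strictAntiOn_of_deriv_neg (convex_Icc _ _)
      · exact fun x hx => (hv1 x (hgt (le_trans hT₂τ₀ hx.1))).continuousAt.continuousWithinAt
      · intro x hx
        rw [interior_Icc] at hx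
        rw [(hv1 x (hgt (le_trans hT₂τ₀ hx.1.le))).deriv]
        have := hF2 x (le_trans hT₂τ₀ hx.1.le) (habove x hx.1.le hx.2).le
        linarith
    obtain ⟨ξ, hξ, hslope⟩ := exists_hasDerivAt_eq_slope v v₁ hτ₀t₅
      (fun x hx => (hv x (hgt (le_trans hT₂τ₀ hx.1))).continuousAt.continuousWithinAt)
      (fun x hx => hv x (hgt (le_trans hT₂τ₀ hx.1.le)))
    have hslope_neg : v₁ ξ < 0 := by
      rw [hslope]
      apply div_neg_of_neg_of_pos
      · linarith
      · linarith [hτ₀t₅]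
    have hfinal : v₁ t₅ < v₁ ξ := hanti ⟨hξ.1.le, hξ.2.le⟩ ⟨hτ₀t₅.le, le_rfl⟩ hξ.2
    have := hcon t₅ (le_trans hT₂τ₀ ht₅Icc.1) hvt₅
    linarith
  obtain ⟨t₅, ht₅T₂, hvt₅, hv₁t₅⟩ := hkey
  have hv₁t₅' : v₁ t₅ ≤ -s2 := by
    have h1 := habs t₅ (le_trans hT₂t₀ ht₅T₂) hvt₅
    rw [abs_of_neg hv₁t₅] at h1
    linarith
  set t₂ : ℝ := t₅ + (vb+1)/c with ht₂def
  have ht₅t₂ : t₅ < t₂ := by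
    rw [ht₂def]
    have : 0 < (vb+1)/c := by positivity
    linarith
  have hallneg : ∀ x, x ∈ Icc t₅ t₂ → v₁ x < -c := by
    by_contra hcon
    push_neg at hcon
    obtain ⟨x₀, hx₀, hx₀'⟩ := hcon
    set D : Set ℝ := Icc t₅ t₂ ∩ v₁ ⁻¹' (Ici (-c)) with hDdef
    have hv₁cont : ContinuousOn v₁ (Icc t₅ t₂) := fun x hx =>
      (hv1 x (hgt (le_trans ht₅T₂ hx.1))).continuousAt.continuousWithinAt
    have hDclosed : IsClosed D :=
      hv₁cont.preimage_isClosed_of_isClosed isClosed_Icc isClosed_Ici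
    have hDne : D.Nonempty := ⟨x₀, hx₀, hx₀'⟩
    have hDbdd : BddBelow D := ⟨t₅, fun x hx => hx.1.1⟩
    set ts : ℝ := sInf D with htsdef
    have htsD : ts ∈ D := hDclosed.csInf_mem hDne hDbdd
    have htsIcc : ts ∈ Icc t₅ t₂ := htsD.1
    have htsmem : -c ≤ v₁ ts := htsD.2
    have hts5 : t₅ < ts := by
      rcases eq_or_lt_of_le htsIcc.1 with h | h
      · exfalso; rw [← h] at htsmem; linarith
      · exact h
    have hbelow : ∀ x, t₅ ≤ x → x < ts → v₁ x < -c := by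
      intro x hx1 hx2
      by_contra hge
      push_neg at hge
      have hxD : x ∈ D := ⟨⟨hx1, le_trans hx2.le htsIcc.2⟩, hge⟩
      exact absurd (csInf_le hDbdd hxD) (not_le.mpr hx2)
    have hlimit : v₁ ts ≤ -c := by
      have hcontAt : ContinuousAt v₁ ts := (hv1 ts (hgt (le_trans ht₅T₂ htsIcc.1))).continuousAt
      have htend : Tendsto v₁ (𝓝[<] ts) (𝓝 (v₁ ts)) :=
        hcontAt.tendsto.mono_left nhdsWithin_le_nhds
      have hev : ∀ᶠ x in 𝓝[<] ts, v₁ x ≤ -c := by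
        filter_upwards [Ioo_mem_nhdsLT_of_mem (show ts ∈ Ioc t₅ ts from ⟨hts5, le_rfl⟩)] with x hx
        exact (hbelow x hx.1.le hx.2).le
      exact le_of_tendsto htend hev
    have hvts : v ts ≤ v t₅ := by
      have h := aux_slope v v₁ t₅ ts 0 hts5.le
        (fun x hx => hv x (hgt (le_trans ht₅T₂ hx.1)))
        (fun x hx => by
          rcases eq_or_lt_of_le hx.2 with h | h
          · rw [h]; linarith
          · exact le_of_lt (lt_of_lt_of_le (hbelow x hx.1 h) (by linarith)))
      linarith
    have h2 := habs ts (le_trans hT₂t₀ (le_trans ht₅T₂ htsIcc.1)) (le_trans hvts hvt₅)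
    rw [abs_of_neg (by linarith : v₁ ts < 0)] at h2
    linarith
  have hdrop := aux_slope v v₁ t₅ t₂ (-c) ht₅t₂.le
    (fun x hx => hv x (hgt (le_trans ht₅T₂ hx.1)))
    (fun x hx => (hallneg x hx).le)
  have heq2 : t₂ - t₅ = (vb+1)/c := by rw [ht₂def]; ring
  rw [heq2] at hdrop
  have hceq : -c * ((vb+1)/c) = -(vb+1) := by field_simp
  have hvt₂pos := hpos t₂ (hgt (le_trans ht₅T₂ ht₅t₂.le))
  linarith

set_option maxHeartbeats 2000000 in
theorem stmt4 (n : ℕ) (hn : 3 ≤ n) (s μ q : ℝ) (hs0 : 0 < s) (hs2 : s < 2)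
    (hμ : 0 < μ) (hq1 : 1 < q) (hq2 : q < twoStar n - 1) (R : ℝ) (hR : 0 < R) :
    ¬ ∃ u : ℝ → ℝ,
        ContDiffOn ℝ 2 u (Set.Ioc 0 R) ∧
        (∀ r ∈ Set.Ioo (0 : ℝ) R, 0 < u r) ∧
        u R = 0 ∧
        (∀ r ∈ Set.Ioo (0 : ℝ) R, radialEq n s μ q u r) ∧
        UpliBound n u := by
  rintro ⟨u, hC, hupos, huR, hode, hbd⟩
  set N : ℝ := (n : ℝ) with hNdef
  have hN3 : (3:ℝ) ≤ N := by rw [hNdef]; exact_mod_cast hn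
  have hN2 : (0:ℝ) < N - 2 := by linarith
  set α : ℝ := (N - 2)/2 with hαdef
  have hα : 0 < α := by positivity
  set p : ℝ := twoStarS n s with hpdef
  have hpform : p = 2*(N - s)/(N - 2) := by
    rw [hpdef, twoStarS]
  have hp2 : 2 < p := by
    rw [hpform, lt_div_iff₀ hN2]; linarith
  have hαp : α * p = N - s := by
    rw [hpform, hαdef]; field_simp
  set δ : ℝ := N - α*(q+1) with hδdef
  have hq2' : q + 1 < 2*N/(N-2) := by
    have : twoStar n = 2*N/(N-2) := by rw [twoStar]
    rw [this] at hq2; linarith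
  have hδ : 0 < δ := by
    rw [hδdef]
    have h1 : α*(q+1) < α*(2*N/(N-2)) := by
      exact mul_lt_mul_of_pos_left hq2' hα
    have h2 : α*(2*N/(N-2)) = N := by rw [hαdef]; field_simp
    linarith
  set T₀ : ℝ := -Real.log R with hT₀def
  have hmem : ∀ t : ℝ, T₀ < t → Real.exp (-t) ∈ Ioo (0:ℝ) R := by
    intro t ht
    constructor
    · exact Real.exp_pos _
    · calc Real.exp (-t) < Real.exp (Real.log R) := Real.exp_lt_exp.mpr (by rw [hT₀def] at ht; linarith)
        _ = R := Real.exp_log hR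
  -- regularity
  have hCo : ContDiffOn ℝ 2 u (Ioo 0 R) := hC.mono Ioo_subset_Ioc_self
  have hud : ∀ r ∈ Ioo (0:ℝ) R, HasDerivAt u (deriv u r) r := by
    intro r hr
    have := (hCo.differentiableOn (by norm_num)).differentiableAt
      (isOpen_Ioo.mem_nhds hr)
    exact this.hasDerivAt
  have hud2 : ∀ r ∈ Ioo (0:ℝ) R, HasDerivAt (deriv u) (deriv (deriv u) r) r := by
    intro r hr
    have h1 : ContDiffOn ℝ 1 (deriv u) (Ioo 0 R) :=
      hCo.deriv_of_isOpen isOpen_Ioo (by norm_num)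
    have := (h1.differentiableOn (by norm_num)).differentiableAt
      (isOpen_Ioo.mem_nhds hr)
    exact this.hasDerivAt
  have hode' : ∀ r ∈ Ioo (0:ℝ) R, deriv (deriv u) r
      = -((N-1)/r) * deriv u r - r^(-s) * u r^(p-1) + μ * u r^q := by
    intro r hr
    have := hode r hr
    unfold radialEq at this
    rw [hpdef]
    linarith
  -- the transformed objects
  set v : ℝ → ℝ := fun t => Real.exp (-(α*t)) * u (Real.exp (-t)) with hvdef
  set v₁ : ℝ → ℝ := fun t => -(Real.exp (-(α*t)) *
      (α * u (Real.exp (-t)) + Real.exp (-t) * deriv u (Real.exp (-t)))) with hv₁def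
  set v₂ : ℝ → ℝ := fun t => α^2 * v t - v t^(p-1) + μ * Real.exp (-(δ*t)) * v t^q with hv₂def
  have hexp_pow : ∀ a b : ℝ, Real.exp a ^ b = Real.exp (a*b) := by
    intro a b
    rw [Real.rpow_def_of_pos (Real.exp_pos a), Real.log_exp]
  have hvpos : ∀ t, T₀ < t → 0 < v t := by
    intro t ht
    exact mul_pos (Real.exp_pos _) (hupos _ (hmem t ht))
  have he1 : ∀ t : ℝ, HasDerivAt (fun t => Real.exp (-(α*t))) (-α*Real.exp (-(α*t))) t := by
    intro t
    have h0 : HasDerivAt (fun t : ℝ => -(α*t)) (-α) t := by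
      simpa [Pi.neg_def] using ((hasDerivAt_id t).const_mul α).neg
    simpa [mul_comm, Function.comp_def] using (Real.hasDerivAt_exp (-(α*t))).comp t h0
  have hein : ∀ t : ℝ, HasDerivAt (fun t => Real.exp (-t)) (-Real.exp (-t)) t := by
    intro t
    have h0 : HasDerivAt (fun t : ℝ => -t) (-1 : ℝ) t := (hasDerivAt_id t).neg
    simpa [Function.comp_def] using (Real.hasDerivAt_exp (-t)).comp t h0
  have heu : ∀ t, T₀ < t → HasDerivAt (fun t => u (Real.exp (-t)))
      (deriv u (Real.exp (-t)) * (-Real.exp (-t))) t := by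
    intro t ht
    exact (hud _ (hmem t ht)).comp t (hein t)
  have hedu : ∀ t, T₀ < t → HasDerivAt (fun t => deriv u (Real.exp (-t)))
      (deriv (deriv u) (Real.exp (-t)) * (-Real.exp (-t))) t := by
    intro t ht
    exact (hud2 _ (hmem t ht)).comp t (hein t)
  have hvd : ∀ t, T₀ < t → HasDerivAt v (v₁ t) t := by
    intro t ht
    have h := (he1 t).mul (heu t ht)
    rw [hvdef, hv₁def]
    refine h.congr_deriv ?_
    ring
  have h2α : 2*α = N - 2 := by rw [hαdef]; ring
  have hode2 : ∀ r ∈ Ioo (0:ℝ) R, r * deriv (deriv u) r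
      = -(N-1) * deriv u r - r * (r^(-s) * u r^(p-1)) + μ * (r * u r^q) := by
    intro r hr
    rw [hode' r hr]
    field_simp [hr.1.ne']

  have hv1d : ∀ t, T₀ < t → HasDerivAt v₁ (v₂ t) t := by
    intro t ht
    have hrR := hmem t ht
    have hrpos : (0:ℝ) < Real.exp (-t) := Real.exp_pos _
    have hU : 0 < u (Real.exp (-t)) := hupos _ hrR
    have hinner := ((heu t ht).const_mul α).add ((hein t).mul (hedu t ht))
    have h := ((he1 t).mul hinner).neg
    have hW : HasDerivAt v₁ (Real.exp (-(α*t)) * (α^2 * u (Real.exp (-t))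
        + (2*α+1) * (Real.exp (-t) * deriv u (Real.exp (-t)))
        + Real.exp (-t) * (Real.exp (-t) * deriv (deriv u) (Real.exp (-t))))) t := by
      rw [hv₁def]
      refine h.congr_deriv ?_
      simp only [Pi.add_apply, Pi.mul_apply]
      ring
    convert hW using 1
    rw [hode2 _ hrR, hv₂def]
    dsimp only
    simp only [hvdef]
    rw [Real.mul_rpow (Real.exp_pos _).le hU.le, Real.mul_rpow (Real.exp_pos _).le hU.le,
        hexp_pow, hexp_pow, hexp_pow]
    have key1 : Real.exp (-(α*t)) * (Real.exp (-t) * Real.exp (-t)) * Real.exp ((-t)*(-s))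
        = Real.exp (-(α*t)*(p-1)) := by
      rw [← Real.exp_add, ← Real.exp_add, ← Real.exp_add]
      congr 1
      linear_combination t*hαp - t*h2α
    have key2 : Real.exp (-(α*t)) * (Real.exp (-t) * Real.exp (-t))
        = Real.exp (-(δ*t)) * Real.exp (-(α*t)*q) := by
      rw [← Real.exp_add, ← Real.exp_add, ← Real.exp_add]
      congr 1
      linear_combination t*hδdef - t*h2α
    linear_combination (u (Real.exp (-t)))^(p-1) * key1 - μ * (u (Real.exp (-t)))^q * key2
      - Real.exp (-(α*t)) * Real.exp (-t) * deriv u (Real.exp (-t)) * h2α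
  set E : ℝ → ℝ := fun t => v₁ t^2/2 - α^2*(v t)^2/2 + (v t)^p/p
      - μ*Real.exp (-(δ*t))*(v t)^(q+1)/(q+1) with hEdef
  have hq1' : (0:ℝ) < q + 1 := by linarith
  have hppos : (0:ℝ) < p := by linarith
  have hEd : ∀ t, T₀ < t → HasDerivAt E (δ*μ*Real.exp (-(δ*t))*(v t)^(q+1)/(q+1)) t := by
    intro t ht
    have hv0 := hvpos t ht
    have a1 : HasDerivAt (fun t => v₁ t^2/2) (v₁ t * v₂ t) t := by
      have h0 := ((hv1d t ht).pow 2).div_const 2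
      refine h0.congr_deriv ?_
      norm_num
      ring
    have a2 : HasDerivAt (fun t => α^2*(v t)^2/2) (α^2 * v t * v₁ t) t := by
      have h0 := (((hvd t ht).pow 2).const_mul (α^2)).div_const 2
      refine h0.congr_deriv ?_
      norm_num
      ring
    have a3 : HasDerivAt (fun t => (v t)^p/p) ((v t)^(p-1) * v₁ t) t := by
      have h0 := ((Real.hasDerivAt_rpow_const (p := p) (Or.inl hv0.ne')).comp t (hvd t ht)).div_const p
      refine h0.congr_deriv ?_
      field_simp
    have a4 : HasDerivAt (fun t => μ*Real.exp (-(δ*t))*(v t)^(q+1)/(q+1))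
        (μ*((-δ*Real.exp (-(δ*t)))*(v t)^(q+1) + Real.exp (-(δ*t))*((q+1)*(v t)^q * v₁ t))/(q+1)) t := by
      have hδe : HasDerivAt (fun t => Real.exp (-(δ*t))) (-δ*Real.exp (-(δ*t))) t := by
        have h0 : HasDerivAt (fun t : ℝ => -(δ*t)) (-δ) t := by
          simpa [Pi.neg_def] using ((hasDerivAt_id t).const_mul δ).neg
        simpa [mul_comm, Function.comp_def] using (Real.hasDerivAt_exp (-(δ*t))).comp t h0
      have hqe : HasDerivAt (fun t => (v t)^(q+1)) ((q+1)*(v t)^q * v₁ t) t := by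
        have h0 := (Real.hasDerivAt_rpow_const (p := q+1) (Or.inl hv0.ne')).comp t (hvd t ht)
        have h1 : q + 1 - 1 = q := by ring
        rw [h1] at h0
        exact h0
      have h0 := ((hδe.mul hqe).const_mul μ).div_const (q+1)
      have hfun : (fun t => μ*Real.exp (-(δ*t))*(v t)^(q+1)/(q+1))
          = (fun t => μ*(Real.exp (-(δ*t))*(v t)^(q+1))/(q+1)) := by
        funext x; ring
      rw [hfun]
      exact h0
    have hsum := ((a1.sub a2).add a3).sub a4
    rw [hEdef]
    refine hsum.congr_deriv ?_
    rw [hv₂def]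
    dsimp only
    field_simp
    ring
  have hEmono : StrictMonoOn E (Ioi T₀) := by
    apply strictMonoOn_of_deriv_pos (convex_Ioi T₀)
    · exact fun x hx => (hEd x hx).continuousAt.continuousWithinAt
    · intro x hx
      rw [interior_Ioi] at hx
      rw [(hEd x hx).deriv]
      have := hvpos x hx
      positivity
  -- boundary limit
  have hRIoc : R ∈ Ioc (0:ℝ) R := ⟨hR, le_rfl⟩
  have h_toR : Tendsto (fun t => Real.exp (-t)) (𝓝[>] T₀) (𝓝[Ioc 0 R] R) := by
    rw [tendsto_nhdsWithin_iff]
    constructor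
    · have hcont : Continuous (fun t : ℝ => Real.exp (-t)) :=
        Real.continuous_exp.comp continuous_neg
      have h0 : Tendsto (fun t => Real.exp (-t)) (𝓝 T₀) (𝓝 (Real.exp (-T₀))) :=
        hcont.continuousAt
      have heq : Real.exp (-T₀) = R := by rw [hT₀def, neg_neg, Real.exp_log hR]
      rw [heq] at h0
      exact h0.mono_left nhdsWithin_le_nhds
    · filter_upwards [self_mem_nhdsWithin] with t ht
      exact Ioo_subset_Ioc_self (hmem t ht)
  have hu0 : Tendsto (fun t => u (Real.exp (-t))) (𝓝[>] T₀) (𝓝 0) := by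
    have h0 := (hC.continuousOn R hRIoc).tendsto.comp h_toR
    rwa [huR] at h0
  set g : ℝ → ℝ := derivWithin u (Ioc 0 R) with hgdef
  have hgcont : ContinuousOn g (Ioc 0 R) :=
    hC.continuousOn_derivWithin (uniqueDiffOn_Ioc 0 R) (by norm_num)
  have hgR : Tendsto (fun t => deriv u (Real.exp (-t))) (𝓝[>] T₀) (𝓝 (g R)) := by
    have h1 : Tendsto (fun t => g (Real.exp (-t))) (𝓝[>] T₀) (𝓝 (g R)) :=
      (hgcont R hRIoc).tendsto.comp h_toR
    apply h1.congr'
    filter_upwards [self_mem_nhdsWithin] with t ht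
    rw [hgdef]
    exact derivWithin_of_mem_nhds (Ioc_mem_nhds (hmem t ht).1 (hmem t ht).2)
  have hexpa : Tendsto (fun t => Real.exp (-(α*t))) (𝓝[>] T₀) (𝓝 (Real.exp (-(α*T₀)))) := by
    have hcont : Continuous (fun t : ℝ => Real.exp (-(α*t))) :=
      Real.continuous_exp.comp ((continuous_const.mul continuous_id).neg)
    exact (hcont.continuousAt).tendsto.mono_left nhdsWithin_le_nhds
  have hrlim : Tendsto (fun t => Real.exp (-t)) (𝓝[>] T₀) (𝓝 R) :=
    (tendsto_nhdsWithin_iff.mp h_toR).1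
  have hv0lim : Tendsto v (𝓝[>] T₀) (𝓝 0) := by
    have h1 := hexpa.mul hu0
    rw [mul_zero] at h1
    exact h1
  have hv1lim : Tendsto v₁ (𝓝[>] T₀)
      (𝓝 (-(Real.exp (-(α*T₀)) * (α * 0 + R * g R)))) := by
    exact (hexpa.mul ((hu0.const_mul α).add (hrlim.mul hgR))).neg
  have hδlim : Tendsto (fun t => Real.exp (-(δ*t))) (𝓝[>] T₀) (𝓝 (Real.exp (-(δ*T₀)))) := by
    have hcont : Continuous (fun t : ℝ => Real.exp (-(δ*t))) :=
      Real.continuous_exp.comp ((continuous_const.mul continuous_id).neg)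
    exact (hcont.continuousAt).tendsto.mono_left nhdsWithin_le_nhds
  have hvplim : Tendsto (fun t => (v t)^p) (𝓝[>] T₀) (𝓝 0) := by
    have h0 := ((Real.continuousAt_rpow_const 0 p (Or.inr (by linarith))).tendsto).comp hv0lim
    rwa [Real.zero_rpow hppos.ne'] at h0
  have hvqlim : Tendsto (fun t => (v t)^(q+1)) (𝓝[>] T₀) (𝓝 0) := by
    have h0 := ((Real.continuousAt_rpow_const 0 (q+1) (Or.inr (by linarith))).tendsto).comp hv0lim
    rwa [Real.zero_rpow hq1'.ne'] at h0
  have hElim : Tendsto E (𝓝[>] T₀)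
      (𝓝 ((-(Real.exp (-(α*T₀)) * (α * 0 + R * g R)))^2/2)) := by
    have T1 := (hv1lim.pow 2).div_const 2
    have T2 := ((hv0lim.pow 2).const_mul (α^2)).div_const 2
    have T3 := hvplim.div_const p
    have T4 := ((hδlim.mul hvqlim).const_mul μ).div_const (q+1)
    have h0 := ((T1.sub T2).add T3).sub T4
    have h1 : Tendsto E (𝓝[>] T₀)
        (𝓝 ((((-(Real.exp (-(α*T₀)) * (α * 0 + R * g R)))^2/2 - α^2*0^2/2 + 0/p)
          - μ*(Real.exp (-(δ*T₀))*0)/(q+1)))) :=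
      Tendsto.congr (fun x => by simp only [hEdef]; ring) h0
    have h2 : (((-(Real.exp (-(α*T₀)) * (α * 0 + R * g R)))^2/2 - α^2*0^2/2 + 0/p)
          - μ*(Real.exp (-(δ*T₀))*0)/(q+1)) = (-(Real.exp (-(α*T₀)) * (α * 0 + R * g R)))^2/2 := by
      simp
    rw [h2] at h1
    exact h1
  have hT₀h : T₀ < T₀ + 1/2 := by linarith
  have hT₀1 : T₀ < T₀ + 1 := by linarith
  have hEhalf : E (T₀ + 1/2) < E (T₀ + 1) := hEmono hT₀h hT₀1 (by linarith)
  have hL : (-(Real.exp (-(α*T₀)) * (α * 0 + R * g R)))^2/2 ≤ E (T₀ + 1/2) := by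
    apply le_of_tendsto hElim
    filter_upwards [Ioo_mem_nhdsGT_of_mem
      (show T₀ ∈ Ico T₀ (T₀+1/2) from ⟨le_rfl, hT₀h⟩)] with x hx
    exact (hEmono hx.1 hT₀h hx.2).le
  set e₀ : ℝ := E (T₀ + 1) with he₀def
  have he₀pos : 0 < e₀ := by
    have h0 : (0:ℝ) ≤ (-(Real.exp (-(α*T₀)) * (α * 0 + R * g R)))^2/2 := by positivity
    exact lt_of_le_of_lt (le_trans h0 hL) hEhalf
  have hEmin : ∀ t, T₀ + 1 ≤ t → e₀ ≤ E t := by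
    intro t ht
    rcases eq_or_lt_of_le ht with h | h
    · rw [he₀def, ← h]
    · exact (hEmono hT₀1 (lt_trans hT₀1 h) h).le
  -- the bound M from the limsup hypothesis
  unfold UpliBound at hbd
  set C : ℝ≥0∞ := Filter.limsup (fun r : ℝ => ENNReal.ofReal (r ^ (((n : ℝ) - 2) / 2) * u r))
    (𝓝[>] (0 : ℝ)) + 1 with hCdef
  have hCne : C ≠ ⊤ := by
    rw [hCdef]
    exact (ENNReal.add_lt_top.mpr ⟨hbd, ENNReal.one_lt_top⟩).ne
  have hev : ∀ᶠ r in 𝓝[>] (0:ℝ),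
      ENNReal.ofReal (r ^ (((n : ℝ) - 2) / 2) * u r) < C :=
    eventually_lt_of_limsup_lt (by rw [hCdef]; exact ENNReal.lt_add_right hbd.ne one_ne_zero)
  set M₀ : ℝ := C.toReal with hM₀def
  obtain ⟨ε, hε, hsub⟩ := mem_nhdsGT_iff_exists_Ioo_subset.mp hev
  have hεpos : (0:ℝ) < ε := hε
  have hminpos : 0 < min ε R := lt_min hεpos hR
  set t₀ : ℝ := max (T₀ + 1) (-Real.log (min ε R) + 1) with ht₀def
  have ht₀gt : T₀ < t₀ := lt_of_lt_of_le hT₀1 (le_max_left _ _)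
  have hMbd : ∀ t, t₀ ≤ t → v t ≤ M₀ := by
    intro t ht
    have h1 : -Real.log (min ε R) + 1 ≤ t := le_trans (le_max_right _ _) ht
    have h2 : Real.exp (-t) < min ε R := by
      calc Real.exp (-t) < Real.exp (Real.log (min ε R)) :=
            Real.exp_lt_exp.mpr (by linarith)
        _ = min ε R := Real.exp_log hminpos
    have hrpos := Real.exp_pos (-t)
    have hmem2 : Real.exp (-t) ∈ Ioo (0:ℝ) ε :=
      ⟨hrpos, lt_of_lt_of_le h2 (min_le_left _ _)⟩
    have h3 := hsub hmem2
    simp only [mem_setOf_eq] at h3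
    have h4 : Real.exp (-t) ^ (((n:ℝ)-2)/2) * u (Real.exp (-t)) ≤ M₀ := by
      rcases le_or_gt (Real.exp (-t) ^ (((n:ℝ)-2)/2) * u (Real.exp (-t))) 0 with hx | hx
      · exact le_trans hx ENNReal.toReal_nonneg
      · have h6 := ENNReal.toReal_mono hCne h3.le
        rwa [ENNReal.toReal_ofReal hx.le] at h6
    have h5 : v t = Real.exp (-t) ^ (((n:ℝ)-2)/2) * u (Real.exp (-t)) := by
      simp only [hvdef]
      rw [hexp_pow]
      congr 2
      rw [hαdef, hNdef]
      ring
    rw [h5]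
    exact h4
  exact aux_core α p μ q δ e₀ M₀ T₀ t₀ v v₁ v₂ hα hp2 hμ (by linarith) hδ ht₀gt he₀pos
    hvd hv1d (fun t ht => rfl) hvpos hMbd
    (fun t ht => hEmin t (le_trans (le_max_left _ _) ht))
end
end

section
/- Let 1 < q < 2* − 1 and let u be a positive radial solution of (E) on (0,R̄) for some 0 < R̄ ≤ ∞, with limsup_{r→0⁺} r^{(n−2)/2} u(r) < ∞. Then for every r ∈ (0,R̄) the integral ∫₀^r ξ^{n−1} u(ξ)^{q+1} dξ is finite, and there exists a constant P ∈ ℝ such that for all r ∈ (0,R̄): z(r)²·F_r(z(r)) = P + (r·z'(r))² + 2·c_{μ,q,n}·∫₀^r ξ^{n−1} u(ξ)^{q+1} dξ, where z(r) := r^{(n−2)/2} u(r). -/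
open Filter Set Real MeasureTheory
open scoped Topology ENNReal

noncomputable section

/-- `λ = (n-2)(2* - 1 - q)/2`. -/
def lam (n : ℕ) (q : ℝ) : ℝ := ((n : ℝ) - 2) * (twoStar n - 1 - q) / 2

/-- `c_{μ,q,n} = λμ/(q+1)`. -/
def cμqn (n : ℕ) (μ q : ℝ) : ℝ := lam n q * μ / (q + 1)

/-- `F_R(ξ) = (n-2)²/4 - (2/2*(s)) ξ^{2*(s)-2} + (2μR^λ/(q+1)) ξ^{q-1}`. -/
def FR (n : ℕ) (s μ q R ξ : ℝ) : ℝ :=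
  ((n : ℝ) - 2) ^ 2 / 4 - (2 / twoStarS n s) * ξ ^ (twoStarS n s - 2)
    + (2 * μ * R ^ lam n q / (q + 1)) * ξ ^ (q - 1)

lemma rpow_eq_mul {x : ℝ} (hx : 0 < x) {a b c : ℝ} (h : a = b + c) :
    x ^ a = x ^ b * x ^ c := by rw [h, Real.rpow_add hx]

lemma derivW (n : ℕ) (hn : 3 ≤ n) (s μ q r : ℝ) (hs0 : 0 < s) (hs2 : s < 2)
    (hq1 : 1 < q) (u : ℝ → ℝ) (hr : 0 < r) (ha : 0 < u r)
    (hu1 : HasDerivAt u (deriv u r) r) (hu2 : HasDerivAt (deriv u) (deriv (deriv u) r) r)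
    (heqq : radialEq n s μ q u r) :
    HasDerivAt (fun ρ : ℝ => (((n:ℝ)-2)/2)^2 * (ρ ^ (((n:ℝ)-2)/2) * u ρ)^2
        - (2 / twoStarS n s) * (ρ ^ (((n:ℝ)-2)/2) * u ρ) ^ (twoStarS n s)
        + (2*μ/(q+1)) * (ρ ^ lam n q * (ρ ^ (((n:ℝ)-2)/2) * u ρ) ^ (q+1))
        - ((((n:ℝ)-2)/2) * (ρ ^ (((n:ℝ)-2)/2) * u ρ) + ρ ^ ((((n:ℝ)-2)/2)+1) * deriv u ρ)^2)
      (2 * cμqn n μ q * (r ^ ((n:ℝ)-1) * u r ^ (q+1))) r := by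
  have heq := heqq
  unfold radialEq at heq
  have hn2 : (2:ℝ) < (n:ℝ) := by exact_mod_cast (by omega : 2 < n)
  have hn2' : (n:ℝ) - 2 ≠ 0 := by linarith
  set α : ℝ := ((n:ℝ)-2)/2 with hαdef
  set σ : ℝ := twoStarS n s with hσdef
  have hα : 0 < α := by rw [hαdef]; linarith
  have hσpos : 0 < σ := by
    rw [hσdef, twoStarS]
    apply div_pos <;> linarith
  set a : ℝ := u r with hadef
  set u1 : ℝ := deriv u r with hu1def
  set u2 : ℝ := deriv (deriv u) r with hu2def
  set z : ℝ := r ^ α * a with hzdef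
  have hz : 0 < z := by rw [hzdef]; positivity
  set zd : ℝ := α * r ^ (α - 1) * a + r ^ α * u1 with hzddef
  have hZ : HasDerivAt (fun ρ : ℝ => ρ ^ α * u ρ) zd r := by
    have h1 : HasDerivAt (fun ρ : ℝ => ρ ^ α) (α * r ^ (α - 1)) r :=
      Real.hasDerivAt_rpow_const (Or.inl hr.ne')
    exact h1.mul hu1
  have h1 : HasDerivAt (fun ρ : ℝ => α^2 * (ρ ^ α * u ρ)^2)
      (α^2 * ((2:ℕ) * (r ^ α * u r)^(2-1) * zd)) r := (hZ.pow 2).const_mul (α^2)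
  have h2 : HasDerivAt (fun ρ : ℝ => (2/σ) * (ρ ^ α * u ρ) ^ σ)
      ((2/σ) * (zd * σ * z ^ (σ-1))) r := (hZ.rpow_const (Or.inl hz.ne')).const_mul (2/σ)
  have h3 : HasDerivAt (fun ρ : ℝ => (2*μ/(q+1)) * (ρ ^ lam n q * (ρ ^ α * u ρ) ^ (q+1)))
      ((2*μ/(q+1)) * ((lam n q * r ^ (lam n q - 1)) * z ^ (q+1)
        + r ^ lam n q * (zd * (q+1) * z ^ (q+1-1)))) r :=
    ((Real.hasDerivAt_rpow_const (Or.inl hr.ne')).mul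
      (hZ.rpow_const (Or.inl hz.ne'))).const_mul (2*μ/(q+1))
  have h4 : HasDerivAt (fun ρ : ℝ => (α * (ρ ^ α * u ρ) + ρ ^ (α+1) * deriv u ρ)^2)
      ((2:ℕ) * (α * z + r ^ (α+1) * u1)^(2-1) * (α * zd + ((α+1) * r ^ (α+1-1) * u1
        + r ^ (α+1) * u2))) r :=
    ((hZ.const_mul α).add
      ((Real.hasDerivAt_rpow_const (p := α+1) (Or.inl hr.ne')).mul hu2)).pow 2
  have hsum := ((h1.sub h2).add h3).sub h4
  refine hsum.congr_deriv ?_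
  symm
  have hrne : r ≠ 0 := hr.ne'
  have hσne : σ ≠ 0 := hσpos.ne'
  have hqne : q + 1 ≠ 0 := by linarith
  have hpLne : r ^ (lam n q - 1) ≠ 0 := (Real.rpow_pos_of_pos hr _).ne'
  have hu2e : u2 = μ * a ^ q - (((n:ℝ) - 1)/r) * u1 - r ^ (-s) * a ^ (σ - 1) := by
    rw [hu2def, hu1def, hadef, hσdef]; linarith [heq]
  have epL : r ^ lam n q = r * r ^ (lam n q - 1) := by
    rw [rpow_eq_mul hr (show lam n q = 1 + (lam n q - 1) by ring), Real.rpow_one]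
  have ep1 : r ^ α = r * r ^ (α - 1) := by
    rw [rpow_eq_mul hr (show α = 1 + (α - 1) by ring), Real.rpow_one]
  have ep2 : r ^ (α + 1) = r * (r * r ^ (α - 1)) := by
    rw [rpow_eq_mul hr (show α + 1 = 1 + α by ring), Real.rpow_one, ep1]
  have er3 : r ^ (3:ℝ) = r * r * r := by
    rw [show (3:ℝ) = ((3:ℕ):ℝ) by norm_num, Real.rpow_natCast]; ring
  have hA : α * (σ - 1) = α - 1 + (3 + -s) := by
    rw [hαdef, hσdef, twoStarS]; field_simp; ring
  have hB : α * q = α - 1 + (3 + -(lam n q)) := by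
    rw [hαdef, lam, twoStar]; field_simp; ring
  have ezs : z ^ (σ - 1) = r ^ (α - 1) * (r * r * r) * (r ^ (-s) * a ^ (σ - 1)) := by
    rw [hzdef, Real.mul_rpow (Real.rpow_nonneg hr.le α) ha.le, ← Real.rpow_mul hr.le,
      rpow_eq_mul hr hA, rpow_eq_mul hr (show (3:ℝ) + -s = 3 + -s from rfl), er3]
    ring
  have ezq : z ^ q = r ^ (α - 1) * (r * r * r) * a ^ q * (r * r ^ (lam n q - 1))⁻¹ := by
    rw [hzdef, Real.mul_rpow (Real.rpow_nonneg hr.le α) ha.le, ← Real.rpow_mul hr.le,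
      rpow_eq_mul hr hB,
      rpow_eq_mul hr (show (3:ℝ) + -(lam n q) = 3 + -(lam n q) from rfl), er3,
      Real.rpow_neg hr.le, epL]
    ring
  have ezq1 : z ^ (q + 1) = z ^ q * z := by
    rw [rpow_eq_mul hz (show q + 1 = q + 1 from rfl), Real.rpow_one]
  have eaq : a ^ (q + 1) = a ^ q * a := by
    rw [rpow_eq_mul ha (show q + 1 = q + 1 from rfl), Real.rpow_one]
  have eRn : r ^ ((n:ℝ) - 1) = r ^ (α - 1) * (r ^ (α - 1) * (r * r * r)) := by
    rw [rpow_eq_mul hr (show (n:ℝ) - 1 = (α - 1) + ((α - 1) + 3) by rw [hαdef]; ring),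
      rpow_eq_mul hr (show (α - 1) + 3 = (α - 1) + 3 from rfl), er3]
  have hlamval : lam n q = (n:ℝ) - ((n:ℝ) - 2) * (q + 1) / 2 := by
    rw [lam, twoStar]; field_simp; ring
  have ecq : cμqn n μ q = ((n:ℝ) - ((n:ℝ) - 2) * (q + 1) / 2) * μ / (q + 1) := by
    rw [cμqn, hlamval]
  rw [← hadef, show q + 1 - 1 = q by ring, show α + 1 - 1 = α by ring]
  simp only [show (2-1 : ℕ) = 1 from rfl, pow_one]
  rw [ezs, ezq1, ezq, eRn, eaq, hzdef, hzddef, epL, ep1, ep2, hu2e, ecq, hlamval]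
  rw [hαdef]
  push_cast
  field_simp
  ring

theorem stmt5 (n : ℕ) (hn : 3 ≤ n) (s μ q : ℝ) (hs0 : 0 < s) (hs2 : s < 2)
    (hμ : 0 < μ) (hq1 : 1 < q) (hq2 : q < twoStar n - 1)
    (Rbar : ℝ≥0∞) (hRbar : 0 < Rbar) (u : ℝ → ℝ)
    (hu : IsRadialSol n s μ q {r : ℝ | 0 < r ∧ ENNReal.ofReal r < Rbar} u)
    (hbd : UpliBound n u) :
    (∀ r : ℝ, 0 < r → ENNReal.ofReal r < Rbar →
      IntegrableOn (fun ξ : ℝ => ξ ^ ((n : ℝ) - 1) * u ξ ^ (q + 1)) (Set.Ioo 0 r)) ∧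
    ∃ P : ℝ, ∀ r : ℝ, 0 < r → ENNReal.ofReal r < Rbar →
      (r ^ (((n : ℝ) - 2) / 2) * u r) ^ 2 * FR n s μ q r (r ^ (((n : ℝ) - 2) / 2) * u r)
        = P + (r * deriv (fun ρ : ℝ => ρ ^ (((n : ℝ) - 2) / 2) * u ρ) r) ^ 2
          + 2 * cμqn n μ q * ∫ ξ in Set.Ioo (0 : ℝ) r, ξ ^ ((n : ℝ) - 1) * u ξ ^ (q + 1) := by
  obtain ⟨hreg, hpos, heqs⟩ := hu
  set I : Set ℝ := {r : ℝ | 0 < r ∧ ENNReal.ofReal r < Rbar} with hIdef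
  have hIopen : IsOpen I := by
    have hIeq : I = Ioi (0:ℝ) ∩ ENNReal.ofReal ⁻¹' (Iio Rbar) := rfl
    rw [hIeq]
    exact isOpen_Ioi.inter (isOpen_Iio.preimage ENNReal.continuous_ofReal)
  have hmem : ∀ {x r : ℝ}, r ∈ I → 0 < x → x ≤ r → x ∈ I := by
    intro x r hrI hx hxr
    exact ⟨hx, lt_of_le_of_lt (ENNReal.ofReal_le_ofReal hxr) hrI.2⟩
  set α : ℝ := ((n:ℝ) - 2) / 2 with hαdef
  have hn2 : (2:ℝ) < (n:ℝ) := by exact_mod_cast (by omega : 2 < n)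
  have hα : 0 < α := by rw [hαdef]; linarith
  set f : ℝ → ℝ := fun ξ => ξ ^ ((n:ℝ) - 1) * u ξ ^ (q + 1) with hfdef
  have hcu : ContinuousOn u I := hreg.continuousOn
  have hfc : ContinuousOn f I := by
    apply ContinuousOn.mul
    · exact continuousOn_id.rpow_const (fun x hx => Or.inl (ne_of_gt hx.1))
    · exact hcu.rpow_const (fun x hx => Or.inl (hpos x hx).ne')
  have hder1 : ∀ r ∈ I, HasDerivAt u (deriv u r) r := by
    intro r hrI
    exact ((hreg.differentiableOn (by norm_num)).differentiableAt
      (hIopen.mem_nhds hrI)).hasDerivAt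
  have hu' : ContDiffOn ℝ 1 (deriv u) I := hreg.deriv_of_isOpen hIopen (by norm_num)
  have hder2 : ∀ r ∈ I, HasDerivAt (deriv u) (deriv (deriv u) r) r := by
    intro r hrI
    exact ((hu'.differentiableOn (by norm_num)).differentiableAt
      (hIopen.mem_nhds hrI)).hasDerivAt
  -- bound near zero
  unfold UpliBound at hbd
  have hbd' : ∃ C : ℝ, 0 ≤ C ∧ ∀ᶠ x in 𝓝[>] (0:ℝ), x ^ α * u x ≤ C := by
    set K := Filter.limsup (fun r : ℝ => ENNReal.ofReal (r ^ α * u r)) (𝓝[>] (0:ℝ)) with hK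
    have hKne : K ≠ ⊤ := hbd.ne
    refine ⟨(K + 1).toReal, ENNReal.toReal_nonneg, ?_⟩
    have hlt : K < K + 1 := ENNReal.lt_add_right hKne one_ne_zero
    have hev := Filter.eventually_lt_of_limsup_lt hlt
    refine hev.mono (fun x hx => ?_)
    rcases le_or_gt (x ^ α * u x) 0 with h | h
    · exact le_trans h ENNReal.toReal_nonneg
    · calc x ^ α * u x = (ENNReal.ofReal (x ^ α * u x)).toReal :=
          (ENNReal.toReal_ofReal h.le).symm
        _ ≤ (K + 1).toReal := ENNReal.toReal_mono (by simp [hKne]) hx.le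
  obtain ⟨C, hC0, hCev⟩ := hbd'
  rw [Filter.eventually_iff, mem_nhdsGT_iff_exists_Ioo_subset] at hCev
  obtain ⟨ε, hε, hεsub⟩ := hCev
  have hw : (-1:ℝ) < (n:ℝ) - 1 - α * (q + 1) := by
    rw [twoStar] at hq2
    have hd : (0:ℝ) < (n:ℝ) - 2 := by linarith
    have h1 : (q + 1) * ((n:ℝ) - 2) < 2 * n :=
      (lt_div_iff₀ hd).mp (by linarith [hq2])
    rw [hαdef]; nlinarith [h1]
  have hint : ∀ r ∈ I, IntegrableOn f (Ioo 0 r) := by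
    intro r hrI
    have hr : 0 < r := hrI.1
    set m := min ε r with hm
    have hm0 : 0 < m := lt_min hε hr
    have hIoo : IntegrableOn f (Ioo 0 m) := by
      have hii : IntervalIntegrable (fun x : ℝ => x ^ ((n:ℝ) - 1 - α * (q + 1)))
          volume 0 m := intervalIntegral.intervalIntegrable_rpow' hw
      have hgi : IntegrableOn (fun x : ℝ => C ^ (q + 1) * x ^ ((n:ℝ) - 1 - α * (q + 1)))
          (Ioo 0 m) :=
        (((intervalIntegrable_iff_integrableOn_Ioo_of_le hm0.le).mp hii)).const_mul _
      apply Integrable.mono' hgi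
      · exact (hfc.mono (fun x hx =>
          hmem hrI hx.1 (le_of_lt (lt_of_lt_of_le hx.2 (min_le_right _ _))))).aestronglyMeasurable
          measurableSet_Ioo
      · rw [ae_restrict_iff' measurableSet_Ioo]
        refine Filter.Eventually.of_forall (fun x hx => ?_)
        have hx0 : 0 < x := hx.1
        have hxI : x ∈ I := hmem hrI hx0 (le_of_lt (lt_of_lt_of_le hx.2 (min_le_right _ _)))
        have hxu : 0 < u x := hpos x hxI
        have hxb : x ^ α * u x ≤ C :=
          hεsub ⟨hx0, lt_of_lt_of_le hx.2 (min_le_left _ _)⟩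
        have hub : u x ≤ C / x ^ α :=
          (le_div_iff₀ (Real.rpow_pos_of_pos hx0 α)).mpr (by linarith [hxb])
        have h2 : u x ^ (q + 1) ≤ (C / x ^ α) ^ (q + 1) :=
          Real.rpow_le_rpow hxu.le hub (by linarith)
        have h3 : (C / x ^ α) ^ (q + 1) = C ^ (q + 1) / x ^ (α * (q + 1)) := by
          rw [Real.div_rpow hC0 (Real.rpow_nonneg hx0.le α), ← Real.rpow_mul hx0.le]
        have hfx0 : 0 ≤ f x :=
          mul_nonneg (Real.rpow_nonneg hx0.le _) (Real.rpow_nonneg hxu.le _)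
        rw [Real.norm_of_nonneg hfx0]
        calc f x = x ^ ((n:ℝ) - 1) * u x ^ (q + 1) := rfl
          _ ≤ x ^ ((n:ℝ) - 1) * (C ^ (q + 1) / x ^ (α * (q + 1))) := by
              apply mul_le_mul_of_nonneg_left _ (Real.rpow_nonneg hx0.le _)
              rw [← h3]; exact h2
          _ = C ^ (q + 1) * x ^ ((n:ℝ) - 1 - α * (q + 1)) := by
              rw [Real.rpow_sub hx0 ((n:ℝ) - 1) (α * (q + 1)), div_eq_mul_inv, div_eq_mul_inv, mul_left_comm]
    have hIcc : IntegrableOn f (Icc m r) :=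
      (hfc.mono (fun x hx => hmem hrI (lt_of_lt_of_le hm0 hx.1) hx.2)).integrableOn_compact
        isCompact_Icc
    have hsub : Ioo 0 r ⊆ Ioo 0 m ∪ Icc m r := by
      intro x hx
      by_cases h : x < m
      · exact Or.inl ⟨hx.1, h⟩
      · exact Or.inr ⟨not_lt.1 h, hx.2.le⟩
    exact (hIoo.union hIcc).mono_set hsub
  refine ⟨fun r h1 h2 => hint r ⟨h1, h2⟩, ?_⟩
  -- choose base point r0
  obtain ⟨r0, hr00, hr0R⟩ : ∃ r0 : ℝ, 0 < r0 ∧ ENNReal.ofReal r0 < Rbar := by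
    rcases eq_or_ne Rbar ⊤ with h | h
    · exact ⟨1, one_pos, by simp [h]⟩
    · have h0 : 0 < Rbar.toReal := ENNReal.toReal_pos hRbar.ne' h
      refine ⟨Rbar.toReal / 2, by linarith, ?_⟩
      calc ENNReal.ofReal (Rbar.toReal / 2) < ENNReal.ofReal Rbar.toReal := by
            rw [ENNReal.ofReal_lt_ofReal_iff h0]; linarith
        _ = Rbar := ENNReal.ofReal_toReal h
  have hr0I : r0 ∈ I := ⟨hr00, hr0R⟩
  set σ : ℝ := twoStarS n s with hσdef
  set W : ℝ → ℝ := fun ρ => α ^ 2 * (ρ ^ α * u ρ) ^ 2 - (2 / σ) * (ρ ^ α * u ρ) ^ σ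
      + (2 * μ / (q + 1)) * (ρ ^ lam n q * (ρ ^ α * u ρ) ^ (q + 1))
      - (α * (ρ ^ α * u ρ) + ρ ^ (α + 1) * deriv u ρ) ^ 2 with hWdef
  have hWd : ∀ r ∈ I, HasDerivAt W (2 * cμqn n μ q * f r) r := by
    intro r hrI
    simp only [hWdef, hfdef, hαdef, hσdef]
    exact derivW n hn s μ q r hs0 hs2 hq1 u hrI.1 (hpos r hrI) (hder1 r hrI)
      (hder2 r hrI) (heqs r hrI)
  have hUIcc : ∀ {r : ℝ}, r ∈ I → uIcc r0 r ⊆ I := by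
    intro r hrI x hx
    rcases le_total r0 r with h | h
    · rw [uIcc_of_le h] at hx; exact hmem hrI (lt_of_lt_of_le hr00 hx.1) hx.2
    · rw [uIcc_of_ge h] at hx; exact hmem hr0I (lt_of_lt_of_le hrI.1 hx.1) hx.2
  have hkey : ∀ r ∈ I, W r - W r0 = 2 * cμqn n μ q * ∫ x in r0..r, f x := by
    intro r hrI
    have h1 : ∀ x ∈ uIcc r0 r, HasDerivAt W (2 * cμqn n μ q * f x) x :=
      fun x hx => hWd x (hUIcc hrI hx)
    have h2 : IntervalIntegrable (fun x => 2 * cμqn n μ q * f x) volume r0 r :=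
      (continuousOn_const.mul (hfc.mono (hUIcc hrI))).intervalIntegrable
    rw [← intervalIntegral.integral_const_mul]
    exact (intervalIntegral.integral_eq_sub_of_hasDerivAt h1 h2).symm
  have hGadd : ∀ r ∈ I, (∫ ξ in Ioo (0:ℝ) r, f ξ) = (∫ ξ in Ioo (0:ℝ) r0, f ξ)
      + ∫ x in r0..r, f x := by
    have main : ∀ b c : ℝ, b ∈ I → c ∈ I → b ≤ c →
        (∫ ξ in Ioo (0:ℝ) c, f ξ) = (∫ ξ in Ioo (0:ℝ) b, f ξ) + ∫ x in b..c, f x := by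
      intro b c hbI hcI hbc
      have hdisj : Disjoint (Ioo (0:ℝ) b) (Ico b c) := by
        rw [Set.disjoint_left]
        rintro x ⟨_, h1⟩ ⟨h2, _⟩
        exact absurd h2 (not_le.2 h1)
      have hun : Ioo (0:ℝ) b ∪ Ico b c = Ioo 0 c := Set.Ioo_union_Ico_eq_Ioo hbI.1 hbc
      have hi1 : IntegrableOn f (Ioo 0 b) := hint b hbI
      have hi2 : IntegrableOn f (Ico b c) := (hint c hcI).mono_set
        (fun x hx => ⟨lt_of_lt_of_le hbI.1 hx.1, hx.2⟩)
      rw [← hun, setIntegral_union hdisj measurableSet_Ico hi1 hi2,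
        intervalIntegral.integral_of_le hbc, integral_Ico_eq_integral_Ioo,
        integral_Ioc_eq_integral_Ioo]
    intro r hrI
    rcases le_total r0 r with h | h
    · exact main r0 r hr0I hrI h
    · have h5 := main r r0 hrI hr0I h
      rw [intervalIntegral.integral_symm]
      linarith [h5]
  refine ⟨W r0 - 2 * cμqn n μ q * ∫ ξ in Ioo (0:ℝ) r0, f ξ, ?_⟩
  intro r hr1 hr2
  have hrI : r ∈ I := ⟨hr1, hr2⟩
  have hzpos : 0 < r ^ α * u r :=
    mul_pos (Real.rpow_pos_of_pos hr1 α) (hpos r hrI)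
  have hZd : deriv (fun ρ : ℝ => ρ ^ α * u ρ) r
      = α * r ^ (α - 1) * u r + r ^ α * deriv u r :=
    HasDerivAt.deriv ((Real.hasDerivAt_rpow_const (Or.inl hr1.ne')).mul (hder1 r hrI))
  have ep1 : r ^ α = r * r ^ (α - 1) := by
    rw [rpow_eq_mul hr1 (show α = 1 + (α - 1) by ring), Real.rpow_one]
  have ep2 : r ^ (α + 1) = r * (r * r ^ (α - 1)) := by
    rw [rpow_eq_mul hr1 (show α + 1 = 1 + α by ring), Real.rpow_one, ep1]
  have hVeq : α * (r ^ α * u r) + r ^ (α + 1) * deriv u r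
      = r * deriv (fun ρ : ℝ => ρ ^ α * u ρ) r := by
    rw [hZd, ep1, ep2]; ring
  have e1 : (r ^ α * u r) ^ σ = (r ^ α * u r) ^ (σ - 2) * (r ^ α * u r) ^ (2:ℕ) := by
    rw [rpow_eq_mul hzpos (show σ = (σ - 2) + ((2:ℕ):ℝ) by push_cast; ring),
      Real.rpow_natCast]
  have e2 : (r ^ α * u r) ^ (q + 1) = (r ^ α * u r) ^ (q - 1) * (r ^ α * u r) ^ (2:ℕ) := by
    rw [rpow_eq_mul hzpos (show q + 1 = (q - 1) + ((2:ℕ):ℝ) by push_cast; ring),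
      Real.rpow_natCast]
  have hLHS : (r ^ α * u r) ^ 2 * FR n s μ q r (r ^ α * u r)
      = W r + (r * deriv (fun ρ : ℝ => ρ ^ α * u ρ) r) ^ 2 := by
    simp only [hWdef, FR]
    rw [← hσdef, e1, e2, ← hVeq, hαdef]
    field_simp
    ring
  have h5 := hkey r hrI
  have h6 := hGadd r hrI
  have h7 : 2 * cμqn n μ q * (∫ ξ in Ioo (0:ℝ) r, f ξ)
      = 2 * cμqn n μ q * (∫ ξ in Ioo (0:ℝ) r0, f ξ)
        + 2 * cμqn n μ q * ∫ x in r0..r, f x := by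
    rw [h6]; ring
  rw [hLHS]
  linarith [h5, h7]
end
end

section
/- Under the hypotheses on δ, h₁, h₂, h₃, C₁, p, a > 0, c < 0 as in the center-stable manifold theorem, let C₂ > 0 and let r₀ ∈ (0, δ/2) satisfy 4C₁(1 + C₂²)r₀ ≤ |c|. Let w : [0,r₀] × [−r₀,r₀] → [−r₀,r₀] be a C₂-Lipschitz continuous function with w(0,0) = 0. Then for every (y₀,z₀) ∈ [0,r₀] × [−r₀,r₀], the initial value problem y' = h₂(w(y,z), y, z), z' = cz + h₃(w(y,z), y, z), (y(0),z(0)) = (y₀,z₀), has a solution defined on all of [0,∞) which satisfies 0 ≤ y(t) ≤ y₀ and |z(t)| ≤ max{y₀, |z₀|} for all t ≥ 0, and (y(t), z(t)) → (0,0) as t → ∞. -/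
open Filter Set Real MeasureTheory
open scoped Topology

noncomputable section

/-- The open Euclidean ball of radius `δ` centred at the origin in `ℝ³ = ℝ × ℝ × ℝ`. -/
def ball3 (δ : ℝ) : Set (ℝ × ℝ × ℝ) :=
  {ξ | ξ.1 ^ 2 + ξ.2.1 ^ 2 + ξ.2.2 ^ 2 < δ ^ 2}

/-- The Euclidean norm of the gradient of `h : ℝ³ → ℝ` at `ξ`. -/
def gradNorm (h : ℝ × ℝ × ℝ → ℝ) (ξ : ℝ × ℝ × ℝ) : ℝ :=
  Real.sqrt ((fderiv ℝ h ξ (1, 0, 0)) ^ 2 + (fderiv ℝ h ξ (0, 1, 0)) ^ 2 +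
    (fderiv ℝ h ξ (0, 0, 1)) ^ 2)

/-- The hypotheses of the center-stable manifold theorem on `h₁, h₂, h₃`. -/
def CSHyp (δ : ℝ) (h₁ h₂ h₃ : ℝ × ℝ × ℝ → ℝ) (C₁ p : ℝ) : Prop :=
  ContDiffOn ℝ 1 h₁ (ball3 δ) ∧ ContDiffOn ℝ 1 h₂ (ball3 δ) ∧ ContDiffOn ℝ 1 h₃ (ball3 δ) ∧
  (∀ ξ ∈ ball3 δ, |h₁ ξ| + |h₂ ξ| + |h₃ ξ| ≤ C₁ * (ξ.1 ^ 2 + ξ.2.1 ^ 2 + ξ.2.2 ^ 2)) ∧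
  (∀ ξ ∈ ball3 δ,
    gradNorm h₁ ξ + gradNorm h₂ ξ + gradNorm h₃ ξ ≤ C₁ * (|ξ.1| + |ξ.2.1| + |ξ.2.2|)) ∧
  (∀ ξ ∈ ball3 δ, h₂ ξ ≤ -C₁ * |ξ.2.1| ^ p) ∧
  (∀ x z : ℝ, (x, (0 : ℝ), z) ∈ ball3 δ → h₂ (x, 0, z) = 0)

/-- The rectangle `[0, r₀] × [-r₀, r₀]`. -/
def rect (r₀ : ℝ) : Set (ℝ × ℝ) := Set.Icc (0 : ℝ) r₀ ×ˢ Set.Icc (-r₀) r₀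

/-- Clamp a point of the plane into the rectangle `[0,r₀] × [-r₀,r₀]`. -/
def pclamp (r₀ : ℝ) (q : ℝ × ℝ) : ℝ × ℝ :=
  (max 0 (min q.1 r₀), max (-r₀) (min q.2 r₀))

/-- The clamped vector field for the center-stable system. -/
def cstField (h₂ h₃ : ℝ × ℝ × ℝ → ℝ) (c r₀ : ℝ) (w : ℝ × ℝ → ℝ) (q : ℝ × ℝ) : ℝ × ℝ :=
  (h₂ (w (pclamp r₀ q), (pclamp r₀ q).1, (pclamp r₀ q).2),
    c * (pclamp r₀ q).2 + h₃ (w (pclamp r₀ q), (pclamp r₀ q).1, (pclamp r₀ q).2))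

lemma clamp_abs_sub (l u a b : ℝ) :
    |max l (min a u) - max l (min b u)| ≤ |a - b| := by
  calc |max l (min a u) - max l (min b u)|
      = |max (min a u) l - max (min b u) l| := by rw [max_comm l, max_comm l]
    _ ≤ |min a u - min b u| := abs_max_sub_max_le_abs _ _ _
    _ ≤ max |a - b| |u - u| := abs_min_sub_min_le_max _ _ _ _
    _ = |a - b| := by simp

/-- Barrier lemma: a differentiable function that starts below `b` and has nonpositive
derivative whenever it is above `b` stays below `b`. -/
lemma barrier_lemma {u u' : ℝ → ℝ} {t₀ t₁ b : ℝ} (ht : t₀ ≤ t₁)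
    (hd : ∀ t, t₀ ≤ t → t ≤ t₁ → HasDerivAt u (u' t) t)
    (h0 : u t₀ ≤ b)
    (hneg : ∀ t, t₀ < t → t ≤ t₁ → b ≤ u t → u' t ≤ 0) :
    u t₁ ≤ b := by
  by_contra hy
  push_neg at hy
  set S := {t | t ∈ Icc t₀ t₁ ∧ u t ≤ b} with hS
  have hcont : ContinuousOn u (Icc t₀ t₁) :=
    fun t ht' => (hd t ht'.1 ht'.2).continuousAt.continuousWithinAt
  have hS_closed : IsClosed S := by
    have : S = Icc t₀ t₁ ∩ u ⁻¹' (Iic b) := rfl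
    rw [this]
    exact hcont.preimage_isClosed_of_isClosed isClosed_Icc isClosed_Iic
  have hne : S.Nonempty := ⟨t₀, ⟨le_rfl, ht⟩, h0⟩
  have hbdd : BddAbove S := ⟨t₁, fun s hs => hs.1.2⟩
  set τ := sSup S with hτ
  have hτS : τ ∈ S := hS_closed.csSup_mem hne hbdd
  have hτ1 : τ < t₁ := lt_of_le_of_ne hτS.1.2 (fun h => by rw [h] at hτS; linarith [hτS.2])
  have hτ0 : t₀ ≤ τ := hτS.1.1
  have hgt : ∀ s, τ < s → s ≤ t₁ → b < u s := by
    intro s hs1 hs2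
    by_contra hsb
    push_neg at hsb
    have : s ∈ S := ⟨⟨le_trans hτ0 hs1.le, hs2⟩, hsb⟩
    exact absurd (le_csSup hbdd this) (not_le.mpr hs1)
  have hanti : AntitoneOn u (Icc τ t₁) := by
    apply antitoneOn_of_deriv_nonpos (convex_Icc _ _)
    · exact hcont.mono (Icc_subset_Icc hτ0 le_rfl)
    · intro s hs
      rw [interior_Icc] at hs
      exact (hd s (le_trans hτ0 hs.1.le) hs.2.le).differentiableAt.differentiableWithinAt
    · intro s hs
      rw [interior_Icc] at hs
      rw [(hd s (le_trans hτ0 hs.1.le) hs.2.le).deriv]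
      exact hneg s (lt_of_le_of_lt hτ0 hs.1) hs.2.le (hgt s hs.1 hs.2.le).le
  have := hanti ⟨le_rfl, hτ1.le⟩ ⟨hτ1.le, le_rfl⟩ hτ1.le
  linarith [hτS.2]

/-- Decay lemma: a nonnegative function whose derivative is `≤ -κ` whenever the function is
`≥ ε` is eventually `≤ ε`. -/
lemma decay_lemma {u u' : ℝ → ℝ} {T ε κ : ℝ} (hκ : 0 < κ)
    (hd : ∀ t, T ≤ t → HasDerivAt u (u' t) t)
    (hlb : ∀ t, T ≤ t → 0 ≤ u t)
    (hdec : ∀ t, T ≤ t → ε ≤ u t → u' t ≤ -κ) :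
    ∃ T', ∀ t, T' ≤ t → u t ≤ ε := by
  have step1 : ∃ t₁, T ≤ t₁ ∧ u t₁ ≤ ε := by
    by_contra h
    push_neg at h
    have hder : ∀ t, T ≤ t → HasDerivAt (fun r => u r + κ * (r - T)) (u' t + κ) t := by
      intro t ht
      have h := (hd t ht).add ((((hasDerivAt_id t).sub_const T)).const_mul κ)
      simp only [mul_one] at h
      exact h
    have hanti : AntitoneOn (fun r => u r + κ * (r - T)) (Ici T) := by
      apply antitoneOn_of_deriv_nonpos (convex_Ici T)
      · intro s hs; exact (hder s hs).continuousAt.continuousWithinAt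
      · intro s hs
        rw [interior_Ici] at hs
        exact (hder s hs.le).differentiableAt.differentiableWithinAt
      · intro s hs
        rw [interior_Ici] at hs
        rw [(hder s hs.le).deriv]
        have := hdec s hs.le (h s hs.le).le
        linarith
    set t₂ := T + (u T + 1) / κ with ht₂
    have hpos : 0 < (u T + 1) / κ := div_pos (by linarith [hlb T le_rfl]) hκ
    have h2 : T ≤ t₂ := by rw [ht₂]; linarith
    have := hanti (self_mem_Ici) (mem_Ici.mpr h2) h2
    simp only at this
    have hkt : κ * (t₂ - T) = u T + 1 := by
      rw [ht₂]; field_simp; ring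
    have : u t₂ ≤ -1 := by linarith
    linarith [hlb t₂ h2]
  obtain ⟨t₁, ht₁, hu₁⟩ := step1
  refine ⟨t₁, fun t ht => ?_⟩
  exact barrier_lemma ht (fun s hs _ => hd s (le_trans ht₁ hs)) hu₁
    (fun s hs1 hs2 hb => le_trans (hdec s (le_trans ht₁ hs1.le) hb) (by linarith))

/-- Iterated local solutions glued at integer times. -/
def iterSol (sol : ℝ → ℝ × ℝ → ℝ → ℝ × ℝ) (x₀ : ℝ × ℝ) : ℕ → ℝ → ℝ × ℝ
  | 0 => sol 0 x₀
  | n + 1 => sol ((n : ℝ) + 1) (iterSol sol x₀ n ((n : ℝ) + 1))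

/-- Global existence for a bounded Lipschitz autonomous field on `ℝ × ℝ`. -/
lemma globalSol (F : ℝ × ℝ → ℝ × ℝ) (K : NNReal) (hF : LipschitzWith K F) (B : ℝ)
    (hB : ∀ q, ‖F q‖ ≤ B) (x₀ : ℝ × ℝ) :
    ∃ x : ℝ → ℝ × ℝ, x 0 = x₀ ∧ ∀ t : ℝ, 0 ≤ t → HasDerivAt x (F (x t)) t := by
  have hB0 : 0 ≤ B := le_trans (norm_nonneg _) (hB 0)
  have step : ∀ (t₀ : ℝ) (pt : ℝ × ℝ), ∃ f : ℝ → ℝ × ℝ, f t₀ = pt ∧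
      ∀ t ∈ Icc (t₀ - 1) (t₀ + 1), HasDerivWithinAt f (F (f t)) (Icc (t₀ - 1) (t₀ + 1)) t := by
    intro t₀ pt
    refine IsPicardLindelof.exists_eq_forall_mem_Icc_hasDerivWithinAt₀ (f := fun _ => F)
      (a := B.toNNReal) (L := B.toNNReal) (K := K)
      (t₀ := (⟨t₀, by constructor <;> linarith⟩ : Icc (t₀ - 1) (t₀ + 1))) ?_
    exact IsPicardLindelof.of_time_independent (a := B.toNNReal) (L := B.toNNReal)
      (fun x _ => (hB x).trans (Real.le_coe_toNNReal B)) hF.lipschitzOnWith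
      (by norm_num [Real.coe_toNNReal _ hB0])
  choose sol hsol0 hsolD using step
  set g := iterSol sol x₀ with hg
  have hgD : ∀ n : ℕ, ∀ t ∈ Icc ((n : ℝ) - 1) ((n : ℝ) + 1),
      HasDerivWithinAt (g n) (F (g n t)) (Icc ((n : ℝ) - 1) ((n : ℝ) + 1)) t := by
    intro n
    cases n with
    | zero => simpa [hg, iterSol] using hsolD 0 x₀
    | succ m =>
      have e : ((m + 1 : ℕ) : ℝ) = (m : ℝ) + 1 := by push_cast; ring
      intro t htmem
      rw [e] at htmem ⊢
      have := hsolD ((m : ℝ) + 1) (g m ((m : ℝ) + 1)) t htmem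
      simpa [hg, iterSol] using this
  have hgj : ∀ n : ℕ, g (n + 1) ((n : ℝ) + 1) = g n ((n : ℝ) + 1) := by
    intro n
    show iterSol sol x₀ (n + 1) ((n : ℝ) + 1) = _
    rw [iterSol]
    exact hsol0 _ _
  set x : ℝ → ℝ × ℝ := fun t => g ⌊t⌋₊ t with hx
  have hfl : ∀ (n : ℕ) (t : ℝ), (n : ℝ) ≤ t → t < (n : ℝ) + 1 → x t = g n t := by
    intro n t h1 h2
    have h0t : (0 : ℝ) ≤ t := le_trans (Nat.cast_nonneg n) h1
    have : ⌊t⌋₊ = n := by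
      rw [Nat.floor_eq_iff h0t]
      exact ⟨h1, by exact_mod_cast h2⟩
    simp [hx, this]
  have hneg : ∀ t : ℝ, t ≤ 0 → x t = g 0 t := by
    intro t ht
    have : ⌊t⌋₊ = 0 := Nat.floor_eq_zero.mpr (lt_of_le_of_lt ht one_pos)
    simp [hx, this]
  have hxnat : ∀ n : ℕ, x (n : ℝ) = g n (n : ℝ) :=
    fun n => hfl n _ le_rfl (lt_add_one _)
  have hx0 : x 0 = x₀ := by
    rw [hneg 0 le_rfl]
    show iterSol sol x₀ 0 0 = x₀
    rw [iterSol]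
    exact hsol0 0 x₀
  refine ⟨x, hx0, ?_⟩
  intro t ht
  obtain ⟨n, hn⟩ : ∃ n, n = ⌊t⌋₊ := ⟨_, rfl⟩
  have h1 : (n : ℝ) ≤ t := hn ▸ Nat.floor_le ht
  have h2 : t < (n : ℝ) + 1 := hn ▸ Nat.lt_floor_add_one t
  rcases eq_or_lt_of_le h1 with heq | hlt
  · -- t is the integer n
    cases n with
    | zero =>
      have ht0 : t = 0 := by exact_mod_cast heq.symm
      subst ht0
      have hmem : (0 : ℝ) ∈ Icc ((0 : ℝ) - 1) ((0 : ℝ) + 1) := by constructor <;> norm_num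
      have hD := (by simpa using hgD 0 0 (by simpa using hmem) :
        HasDerivWithinAt (g 0) (F (g 0 0)) (Icc (-1 : ℝ) 1) 0)
      have hD' := hD.hasDerivAt (Icc_mem_nhds (by norm_num) (by norm_num))
      have hev : x =ᶠ[𝓝 (0 : ℝ)] g 0 := by
        filter_upwards [Ioo_mem_nhds (show (-1 : ℝ) < 0 by norm_num) (show (0 : ℝ) < 1 by norm_num)]
          with s hs
        rcases le_or_gt s 0 with h | h
        · exact hneg s h
        · exact hfl 0 s (by simpa using h.le) (by simpa using hs.2)
      have := hD'.congr_of_eventuallyEq hev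
      rw [show x 0 = g 0 0 from by simpa using hxnat 0]
      exact this
    | succ m =>
      have e : ((m + 1 : ℕ) : ℝ) = (m : ℝ) + 1 := by push_cast; ring
      have htm : t = (m : ℝ) + 1 := by rw [← heq]; exact e
      subst htm
      have hxeq : x ((m : ℝ) + 1) = g (m + 1) ((m : ℝ) + 1) := by
        have := hxnat (m + 1); rw [e] at this; exact this
      have hgmeq : x ((m : ℝ) + 1) = g m ((m : ℝ) + 1) := by rw [hxeq]; exact hgj m
      have hRg : HasDerivWithinAt (g (m + 1)) (F (g (m + 1) ((m : ℝ) + 1)))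
          (Icc ((m : ℝ)) ((m : ℝ) + 2)) ((m : ℝ) + 1) := by
        have := hgD (m + 1) ((m : ℝ) + 1) (by rw [e]; constructor <;> linarith)
        rw [e, show (m : ℝ) + 1 - 1 = (m : ℝ) by ring, show (m : ℝ) + 1 + 1 = (m : ℝ) + 2 by ring]
          at this
        exact this
      have hRx : HasDerivWithinAt x (F (x ((m : ℝ) + 1))) (Ici ((m : ℝ) + 1)) ((m : ℝ) + 1) := by
        have h' := hRg.mono_of_mem_nhdsWithin
          (Icc_mem_nhdsGE_of_mem ⟨by linarith, by linarith⟩)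
        have hev : x =ᶠ[𝓝[Ici ((m : ℝ) + 1)] ((m : ℝ) + 1)] g (m + 1) := by
          filter_upwards [Ico_mem_nhdsGE_of_mem
            (show ((m : ℝ) + 1) ∈ Ico ((m : ℝ) + 1) ((m : ℝ) + 2) from ⟨le_rfl, by linarith⟩)]
            with s hs
          exact hfl (m + 1) s (by rw [e]; exact hs.1) (by rw [e]; linarith [hs.2])
        have := h'.congr_of_eventuallyEq hev hxeq
        rw [← hxeq] at this
        exact this
      have hLg : HasDerivWithinAt (g m) (F (g m ((m : ℝ) + 1)))
          (Icc ((m : ℝ) - 1) ((m : ℝ) + 1)) ((m : ℝ) + 1) :=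
        hgD m _ ⟨by linarith, le_rfl⟩
      have hLx : HasDerivWithinAt x (F (x ((m : ℝ) + 1))) (Iic ((m : ℝ) + 1)) ((m : ℝ) + 1) := by
        have h' := hLg.mono_of_mem_nhdsWithin
          (Icc_mem_nhdsLE_of_mem ⟨by linarith, le_rfl⟩)
        have hev : x =ᶠ[𝓝[Iic ((m : ℝ) + 1)] ((m : ℝ) + 1)] g m := by
          filter_upwards [Ioc_mem_nhdsLE_of_mem
            (show ((m : ℝ) + 1) ∈ Ioc ((m : ℝ)) ((m : ℝ) + 1) from ⟨by linarith, le_rfl⟩)]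
            with s hs
          rcases eq_or_lt_of_le hs.2 with hse | hslt
          · rw [hse]; exact hgmeq
          · exact hfl m s hs.1.le hslt
        have := h'.congr_of_eventuallyEq hev hgmeq
        rw [← hgmeq] at this
        exact this
      have := hLx.union hRx
      rw [Iic_union_Ici] at this
      exact hasDerivWithinAt_univ.mp this
  · have hDg := (hgD n t ⟨by linarith, h2.le⟩).hasDerivAt (Icc_mem_nhds (by linarith) (by linarith))
    have hev : x =ᶠ[𝓝 t] g n := by
      filter_upwards [Ioo_mem_nhds hlt h2] with s hs
      exact hfl n s hs.1.le hs.2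
    have hxt : x t = g n t := hfl n t h1 h2
    rw [hxt]
    exact hDg.congr_of_eventuallyEq hev

set_option maxHeartbeats 3000000 in
theorem stmt17 (δ : ℝ) (hδ : 0 < δ) (h₁ h₂ h₃ : ℝ × ℝ × ℝ → ℝ)
    (C₁ p : ℝ) (hC₁ : 0 < C₁) (hp : 1 < p) (hhyp : CSHyp δ h₁ h₂ h₃ C₁ p)
    (a c : ℝ) (ha : 0 < a) (hc : c < 0)
    (C₂ : ℝ) (hC₂ : 0 < C₂) (r₀ : ℝ) (hr₀0 : 0 < r₀) (hr₀δ : r₀ < δ / 2)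
    (hr₀c : 4 * C₁ * (1 + C₂ ^ 2) * r₀ ≤ |c|)
    (w : ℝ × ℝ → ℝ)
    (hwlip : ∀ p₁ ∈ rect r₀, ∀ p₂ ∈ rect r₀,
      |w p₁ - w p₂| ≤ C₂ * Real.sqrt ((p₁.1 - p₂.1) ^ 2 + (p₁.2 - p₂.2) ^ 2))
    (hwrange : ∀ pt ∈ rect r₀, w pt ∈ Set.Icc (-r₀) r₀)
    (hw0 : w (0, 0) = 0) :
    ∀ y₀ ∈ Set.Icc (0 : ℝ) r₀, ∀ z₀ ∈ Set.Icc (-r₀) r₀,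
      ∃ y z : ℝ → ℝ,
        y 0 = y₀ ∧ z 0 = z₀ ∧
        (∀ t : ℝ, 0 ≤ t →
          HasDerivAt y (h₂ (w (y t, z t), y t, z t)) t ∧
          HasDerivAt z (c * z t + h₃ (w (y t, z t), y t, z t)) t) ∧
        (∀ t : ℝ, 0 ≤ t → 0 ≤ y t ∧ y t ≤ y₀ ∧ |z t| ≤ max y₀ |z₀|) ∧
        Tendsto (fun t : ℝ => (y t, z t)) atTop (𝓝 (0, 0)) := by
  obtain ⟨hh1, hh2, hh3, hb4, hb5, hb6, hb7⟩ := hhyp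
  intro y₀ hy₀ z₀ hz₀
  obtain ⟨hy₀0, hy₀r⟩ := hy₀
  obtain ⟨hz₀l, hz₀r⟩ := hz₀
  have habsz₀ : |z₀| ≤ r₀ := abs_le.mpr ⟨hz₀l, hz₀r⟩
  set M := max y₀ |z₀| with hM
  have hM0 : 0 ≤ M := le_trans hy₀0 (le_max_left _ _)
  have hMr : M ≤ r₀ := max_le hy₀r habsz₀
  have hcabs : 0 < |c| := abs_pos.mpr (ne_of_lt hc)
  have habsc : |c| = -c := abs_of_neg hc
  have hkey : C₁ * (1 + C₂ ^ 2) * r₀ ≤ |c| / 4 := by linarith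
  have hopen : IsOpen (ball3 δ) := by
    have : ball3 δ = (fun ξ : ℝ × ℝ × ℝ => ξ.1 ^ 2 + ξ.2.1 ^ 2 + ξ.2.2 ^ 2) ⁻¹' Iio (δ ^ 2) := rfl
    rw [this]
    exact IsOpen.preimage (by fun_prop) isOpen_Iio
  have hmem_rect : ∀ q : ℝ × ℝ, q ∈ rect r₀ ↔ (0 ≤ q.1 ∧ q.1 ≤ r₀) ∧ (-r₀ ≤ q.2 ∧ q.2 ≤ r₀) := by
    intro q
    constructor
    · intro hq
      exact ⟨⟨hq.1.1, hq.1.2⟩, hq.2.1, hq.2.2⟩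
    · intro hq
      exact ⟨⟨hq.1.1, hq.1.2⟩, hq.2.1, hq.2.2⟩
  have h00 : ((0 : ℝ), (0 : ℝ)) ∈ rect r₀ := by
    rw [hmem_rect]
    norm_num [hr₀0.le]
  have hWball : ∀ q ∈ rect r₀, (w q, q.1, q.2) ∈ ball3 δ := by
    intro q hq
    obtain ⟨⟨hq1, hq2⟩, hq3, hq4⟩ := (hmem_rect q).mp hq
    obtain ⟨hw1, hw2⟩ := hwrange q hq
    show w q ^ 2 + q.1 ^ 2 + q.2 ^ 2 < δ ^ 2
    have e1 : w q ^ 2 ≤ r₀ ^ 2 := by nlinarith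
    have e2 : q.1 ^ 2 ≤ r₀ ^ 2 := by nlinarith
    have e3 : q.2 ^ 2 ≤ r₀ ^ 2 := by nlinarith
    nlinarith
  have hpc_rect : ∀ q : ℝ × ℝ, pclamp r₀ q ∈ rect r₀ := by
    intro q
    rw [hmem_rect]
    refine ⟨⟨le_max_left _ _, max_le hr₀0.le (min_le_right _ _)⟩,
      le_max_left _ _, max_le (by linarith) (min_le_right _ _)⟩
  have hpc_id : ∀ q ∈ rect r₀, pclamp r₀ q = q := by
    intro q hq
    obtain ⟨⟨hq1, hq2⟩, hq3, hq4⟩ := (hmem_rect q).mp hq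
    show (_, _) = q
    rw [min_eq_left hq2, max_eq_right hq1, min_eq_left hq4, max_eq_right hq3]
  have hpc_dist : ∀ q q' : ℝ × ℝ, dist (pclamp r₀ q) (pclamp r₀ q') ≤ dist q q' := by
    intro q q'
    rw [Prod.dist_eq, Prod.dist_eq]
    apply max_le
    · exact le_trans (by rw [Real.dist_eq, Real.dist_eq]; exact clamp_abs_sub _ _ _ _)
        (le_max_left _ _)
    · exact le_trans (by rw [Real.dist_eq, Real.dist_eq]; exact clamp_abs_sub _ _ _ _)
        (le_max_right _ _)
  have hwlip' : ∀ q ∈ rect r₀, ∀ q' ∈ rect r₀, |w q - w q'| ≤ 2 * C₂ * dist q q' := by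
    intro q hq q' hq'
    refine (hwlip q hq q' hq').trans ?_
    have h1 : Real.sqrt ((q.1 - q'.1) ^ 2 + (q.2 - q'.2) ^ 2)
        ≤ |q.1 - q'.1| + |q.2 - q'.2| := by
      rw [show |q.1 - q'.1| + |q.2 - q'.2|
          = Real.sqrt ((|q.1 - q'.1| + |q.2 - q'.2|) ^ 2) from
        (Real.sqrt_sq (by positivity)).symm]
      apply Real.sqrt_le_sqrt
      nlinarith [sq_abs (q.1 - q'.1), sq_abs (q.2 - q'.2),
        mul_nonneg (abs_nonneg (q.1 - q'.1)) (abs_nonneg (q.2 - q'.2))]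
    have h2 : |q.1 - q'.1| ≤ dist q q' := by
      rw [Prod.dist_eq, ← Real.dist_eq]
      exact le_max_left _ _
    have h3 : |q.2 - q'.2| ≤ dist q q' := by
      rw [Prod.dist_eq, ← Real.dist_eq]
      exact le_max_right _ _
    nlinarith [hC₂.le]
  have hK3iff : ∀ ξ : ℝ × ℝ × ℝ, ξ ∈ Metric.closedBall (0 : ℝ × ℝ × ℝ) r₀ ↔
      |ξ.1| ≤ r₀ ∧ |ξ.2.1| ≤ r₀ ∧ |ξ.2.2| ≤ r₀ := by
    intro ξ
    rw [mem_closedBall_zero_iff, Prod.norm_def, Prod.norm_def]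
    simp [Real.norm_eq_abs, max_le_iff, and_assoc]
  have hK3sub : Metric.closedBall (0 : ℝ × ℝ × ℝ) r₀ ⊆ ball3 δ := by
    intro ξ hξ
    obtain ⟨e1, e2, e3⟩ := (hK3iff ξ).mp hξ
    show ξ.1 ^ 2 + ξ.2.1 ^ 2 + ξ.2.2 ^ 2 < δ ^ 2
    have f1 : ξ.1 ^ 2 ≤ r₀ ^ 2 := by nlinarith [sq_abs ξ.1, abs_nonneg ξ.1]
    have f2 : ξ.2.1 ^ 2 ≤ r₀ ^ 2 := by nlinarith [sq_abs ξ.2.1, abs_nonneg ξ.2.1]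
    have f3 : ξ.2.2 ^ 2 ≤ r₀ ^ 2 := by nlinarith [sq_abs ξ.2.2, abs_nonneg ξ.2.2]
    nlinarith
  have hWK3 : ∀ q ∈ rect r₀,
      ((w q, q.1, q.2) : ℝ × ℝ × ℝ) ∈ Metric.closedBall (0 : ℝ × ℝ × ℝ) r₀ := by
    intro q hq
    obtain ⟨⟨hq1, hq2⟩, hq3, hq4⟩ := (hmem_rect q).mp hq
    obtain ⟨hw1, hw2⟩ := hwrange q hq
    rw [hK3iff]
    exact ⟨abs_le.mpr ⟨hw1, hw2⟩, abs_le.mpr ⟨by linarith, hq2⟩, abs_le.mpr ⟨hq3, hq4⟩⟩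
  have liph : ∀ h : ℝ × ℝ × ℝ → ℝ, ContDiffOn ℝ 1 h (ball3 δ) →
      ∃ Kh : ℝ, 0 ≤ Kh ∧ ∀ ξ ∈ Metric.closedBall (0 : ℝ × ℝ × ℝ) r₀,
        ∀ ξ' ∈ Metric.closedBall (0 : ℝ × ℝ × ℝ) r₀, dist (h ξ) (h ξ') ≤ Kh * dist ξ ξ' := by
    intro h hh
    have hfc : ContinuousOn (fderiv ℝ h) (Metric.closedBall (0 : ℝ × ℝ × ℝ) r₀) :=
      (hh.continuousOn_fderiv_of_isOpen hopen le_rfl).mono hK3sub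
    obtain ⟨Kh, hKh⟩ := (isCompact_closedBall (0 : ℝ × ℝ × ℝ) r₀).exists_bound_of_continuousOn hfc
    refine ⟨max Kh 0, le_max_right _ _, ?_⟩
    have hlip : LipschitzOnWith (Real.toNNReal (max Kh 0)) h
        (Metric.closedBall (0 : ℝ × ℝ × ℝ) r₀) := by
      apply Convex.lipschitzOnWith_of_nnnorm_hasFDerivWithin_le (f' := fderiv ℝ h)
        (fun ξ hξ => (((hh.contDiffAt (hopen.mem_nhds (hK3sub hξ))).differentiableAt
          one_ne_zero).hasFDerivAt).hasFDerivWithinAt)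
        (fun ξ hξ => ?_) (convex_closedBall _ _)
      rw [← norm_toNNReal]
      exact Real.toNNReal_mono ((hKh ξ hξ).trans (le_max_left _ _))
    intro ξ hξ ξ' hξ'
    have := hlip.dist_le_mul ξ hξ ξ' hξ'
    rwa [Real.coe_toNNReal _ (le_max_right _ _)] at this
  obtain ⟨K2, hK20, hK2⟩ := liph h₂ hh2
  obtain ⟨K3, hK30, hK3⟩ := liph h₃ hh3
  have hWdist : ∀ q ∈ rect r₀, ∀ q' ∈ rect r₀,
      dist ((w q, q.1, q.2) : ℝ × ℝ × ℝ) ((w q', q'.1, q'.2) : ℝ × ℝ × ℝ)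
        ≤ (2 * C₂ + 1) * dist q q' := by
    intro q hq q' hq'
    have h1 := hwlip' q hq q' hq'
    have h2 : dist q.1 q'.1 ≤ dist q q' := by rw [Prod.dist_eq]; exact le_max_left _ _
    have h3 : dist q.2 q'.2 ≤ dist q q' := by rw [Prod.dist_eq]; exact le_max_right _ _
    have hd0 : (0 : ℝ) ≤ dist q q' := dist_nonneg
    have hmax : dist ((w q, q.1, q.2) : ℝ × ℝ × ℝ) ((w q', q'.1, q'.2) : ℝ × ℝ × ℝ)
        = max (dist (w q) (w q')) (max (dist q.1 q'.1) (dist q.2 q'.2)) := by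
      rw [Prod.dist_eq, Prod.dist_eq]
    rw [hmax]
    apply max_le
    · rw [Real.dist_eq]
      nlinarith [hC₂.le]
    · apply max_le
      · nlinarith [hC₂.le]
      · nlinarith [hC₂.le]
  set B := |c| * r₀ + 3 * C₁ * r₀ ^ 2 with hB
  set F := cstField h₂ h₃ c r₀ w with hF
  have hF1 : ∀ q : ℝ × ℝ, (F q).1
      = h₂ (w (pclamp r₀ q), (pclamp r₀ q).1, (pclamp r₀ q).2) := fun q => rfl
  have hF2 : ∀ q : ℝ × ℝ, (F q).2
      = c * (pclamp r₀ q).2 + h₃ (w (pclamp r₀ q), (pclamp r₀ q).1, (pclamp r₀ q).2) :=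
    fun q => rfl
  set KT := K2 * (2 * C₂ + 1) + (|c| + K3 * (2 * C₂ + 1)) with hKT
  have hKT0 : 0 ≤ KT := by
    rw [hKT]
    have := abs_nonneg c
    nlinarith [hC₂.le]
  have hFlipR : ∀ q q' : ℝ × ℝ, dist (F q) (F q') ≤ KT * dist q q' := by
    intro q q'
    set u := pclamp r₀ q with hu
    set u' := pclamp r₀ q' with hu'
    have hur : u ∈ rect r₀ := hpc_rect q
    have hur' : u' ∈ rect r₀ := hpc_rect q'
    have hd0 : (0 : ℝ) ≤ dist q q' := dist_nonneg
    have hWd : dist ((w u, u.1, u.2) : ℝ × ℝ × ℝ) ((w u', u'.1, u'.2) : ℝ × ℝ × ℝ)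
        ≤ (2 * C₂ + 1) * dist q q' := by
      refine (hWdist u hur u' hur').trans ?_
      have := hpc_dist q q'
      nlinarith [hC₂.le]
    have hdu : dist u.2 u'.2 ≤ dist q q' := by
      refine le_trans ?_ (hpc_dist q q')
      rw [Prod.dist_eq]
      exact le_max_right _ _
    have hWd0 : (0 : ℝ) ≤ dist ((w u, u.1, u.2) : ℝ × ℝ × ℝ) ((w u', u'.1, u'.2) : ℝ × ℝ × ℝ) :=
      dist_nonneg
    have e1 : dist (F q).1 (F q').1 ≤ K2 * (2 * C₂ + 1) * dist q q' := by
      rw [hF1, hF1]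
      have := hK2 _ (hWK3 u hur) _ (hWK3 u' hur')
      nlinarith
    have e2 : dist (F q).2 (F q').2 ≤ (|c| + K3 * (2 * C₂ + 1)) * dist q q' := by
      rw [hF2, hF2]
      have h3d := hK3 _ (hWK3 u hur) _ (hWK3 u' hur')
      rw [Real.dist_eq] at h3d ⊢
      rw [Real.dist_eq] at hdu
      have habs : |c * u.2 + h₃ (w u, u.1, u.2) - (c * u'.2 + h₃ (w u', u'.1, u'.2))|
          ≤ |c| * |u.2 - u'.2| + |h₃ (w u, u.1, u.2) - h₃ (w u', u'.1, u'.2)| := by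
        calc |c * u.2 + h₃ (w u, u.1, u.2) - (c * u'.2 + h₃ (w u', u'.1, u'.2))|
            = |c * (u.2 - u'.2) + (h₃ (w u, u.1, u.2) - h₃ (w u', u'.1, u'.2))| := by
              ring_nf
          _ ≤ |c * (u.2 - u'.2)| + |h₃ (w u, u.1, u.2) - h₃ (w u', u'.1, u'.2)| := abs_add_le _ _
          _ = |c| * |u.2 - u'.2| + |h₃ (w u, u.1, u.2) - h₃ (w u', u'.1, u'.2)| := by
              rw [abs_mul]
      nlinarith [abs_nonneg (u.2 - u'.2), hK30, hcabs.le]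
    have hd1 : (0 : ℝ) ≤ dist (F q).1 (F q').1 := dist_nonneg
    have hd2 : (0 : ℝ) ≤ dist (F q).2 (F q').2 := dist_nonneg
    rw [Prod.dist_eq, hKT]
    apply max_le
    · nlinarith [hK30, hcabs.le, hC₂.le]
    · nlinarith [hK20, hC₂.le]
  have hFlip : LipschitzWith (Real.toNNReal KT) F :=
    LipschitzWith.of_dist_le_mul fun q q' => by
      rw [Real.coe_toNNReal _ hKT0]; exact hFlipR q q'
  have hFbd : ∀ q : ℝ × ℝ, ‖F q‖ ≤ B := by
    intro q
    set u := pclamp r₀ q with hu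
    have hur : u ∈ rect r₀ := hpc_rect q
    obtain ⟨⟨hu1, hu2⟩, hu3, hu4⟩ := (hmem_rect u).mp hur
    obtain ⟨hw1, hw2⟩ := hwrange u hur
    have hball := hWball u hur
    have hbb : |h₁ (w u, u.1, u.2)| + |h₂ (w u, u.1, u.2)| + |h₃ (w u, u.1, u.2)|
        ≤ C₁ * (w u ^ 2 + u.1 ^ 2 + u.2 ^ 2) := hb4 _ hball
    have habs2 : |u.2| ≤ r₀ := abs_le.mpr ⟨hu3, hu4⟩
    rw [Prod.norm_def]
    apply max_le
    · rw [Real.norm_eq_abs, hF1]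
      have e1 : w u ^ 2 ≤ r₀ ^ 2 := by nlinarith
      have e2 : u.1 ^ 2 ≤ r₀ ^ 2 := by nlinarith
      have e3 : u.2 ^ 2 ≤ r₀ ^ 2 := by nlinarith
      have key : C₁ * (w u ^ 2 + u.1 ^ 2 + u.2 ^ 2) ≤ C₁ * (3 * r₀ ^ 2) :=
        mul_le_mul_of_nonneg_left (by linarith) hC₁.le
      have hcr : 0 ≤ |c| * r₀ := mul_nonneg hcabs.le hr₀0.le
      linarith [abs_nonneg (h₁ (w u, u.1, u.2)), abs_nonneg (h₃ (w u, u.1, u.2))]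
    · rw [Real.norm_eq_abs, hF2]
      have habs : |c * u.2 + h₃ (w u, u.1, u.2)| ≤ |c| * |u.2| + |h₃ (w u, u.1, u.2)| := by
        calc |c * u.2 + h₃ (w u, u.1, u.2)| ≤ |c * u.2| + |h₃ (w u, u.1, u.2)| := abs_add_le _ _
          _ = |c| * |u.2| + |h₃ (w u, u.1, u.2)| := by rw [abs_mul]
      have e1 : w u ^ 2 ≤ r₀ ^ 2 := by nlinarith
      have e2 : u.1 ^ 2 ≤ r₀ ^ 2 := by nlinarith
      have e3 : u.2 ^ 2 ≤ r₀ ^ 2 := by nlinarith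
      have key : C₁ * (w u ^ 2 + u.1 ^ 2 + u.2 ^ 2) ≤ C₁ * (3 * r₀ ^ 2) :=
        mul_le_mul_of_nonneg_left (by linarith) hC₁.le
      have hcu : |c| * |u.2| ≤ |c| * r₀ := mul_le_mul_of_nonneg_left habs2 hcabs.le
      linarith [abs_nonneg (h₁ (w u, u.1, u.2)), abs_nonneg (h₂ (w u, u.1, u.2))]
  obtain ⟨x, hx0, hxD⟩ := globalSol F (Real.toNNReal KT) hFlip B hFbd (y₀, z₀)
  set y := fun t : ℝ => (x t).1 with hy
  set z := fun t : ℝ => (x t).2 with hz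
  have hy0eq : y 0 = y₀ := by show (x 0).1 = y₀; rw [hx0]
  have hz0eq : z 0 = z₀ := by show (x 0).2 = z₀; rw [hx0]
  have hyD : ∀ t : ℝ, 0 ≤ t → HasDerivAt y ((F (x t)).1) t := fun t ht =>
    (ContinuousLinearMap.fst ℝ ℝ ℝ).hasFDerivAt.comp_hasDerivAt t (hxD t ht)
  have hzD : ∀ t : ℝ, 0 ≤ t → HasDerivAt z ((F (x t)).2) t := fun t ht =>
    (ContinuousLinearMap.snd ℝ ℝ ℝ).hasFDerivAt.comp_hasDerivAt t (hxD t ht)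
  have hF1le : ∀ q : ℝ × ℝ, (F q).1 ≤ 0 := by
    intro q
    have hball := hWball _ (hpc_rect q)
    have h6 : h₂ (w (pclamp r₀ q), (pclamp r₀ q).1, (pclamp r₀ q).2)
        ≤ -C₁ * |(pclamp r₀ q).1| ^ p := hb6 _ hball
    have hpow : 0 ≤ |(pclamp r₀ q).1| ^ p := Real.rpow_nonneg (abs_nonneg _) p
    rw [hF1]
    nlinarith
  have hF1zero : ∀ q : ℝ × ℝ, q.1 ≤ 0 → (F q).1 = 0 := by
    intro q hq
    have hcl : (pclamp r₀ q).1 = 0 := by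
      show max 0 (min q.1 r₀) = 0
      exact max_eq_left (le_trans (min_le_left _ _) hq)
    have hball := hWball _ (hpc_rect q)
    rw [hF1, hcl]
    rw [hcl] at hball
    exact hb7 _ _ hball
  have h3bd : ∀ q ∈ rect r₀, |h₃ (w q, q.1, q.2)| ≤ |c| / 4 * (q.1 + |q.2|) := by
    intro q hq
    obtain ⟨⟨hq1, hq2⟩, hq3, hq4⟩ := (hmem_rect q).mp hq
    have hball := hWball q hq
    have hbb : |h₁ (w q, q.1, q.2)| + |h₂ (w q, q.1, q.2)| + |h₃ (w q, q.1, q.2)|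
        ≤ C₁ * (w q ^ 2 + q.1 ^ 2 + q.2 ^ 2) := hb4 _ hball
    have hwsq : w q ^ 2 ≤ C₂ ^ 2 * (q.1 ^ 2 + q.2 ^ 2) := by
      have h1 := hwlip q hq (0, 0) h00
      rw [hw0] at h1
      have h1' : |w q| ≤ C₂ * Real.sqrt (q.1 ^ 2 + q.2 ^ 2) := by
        simpa using h1
      have hsq : Real.sqrt (q.1 ^ 2 + q.2 ^ 2) ^ 2 = q.1 ^ 2 + q.2 ^ 2 :=
        Real.sq_sqrt (by positivity)
      nlinarith [abs_nonneg (w q), sq_abs (w q), Real.sqrt_nonneg (q.1 ^ 2 + q.2 ^ 2), hC₂.le]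
    have s1 : |h₃ (w q, q.1, q.2)| ≤ C₁ * (w q ^ 2 + q.1 ^ 2 + q.2 ^ 2) := by
      nlinarith [abs_nonneg (h₁ (w q, q.1, q.2)), abs_nonneg (h₂ (w q, q.1, q.2))]
    have s3 : q.1 ^ 2 + q.2 ^ 2 ≤ r₀ * (q.1 + |q.2|) := by
      nlinarith [sq_abs q.2, abs_nonneg q.2, abs_le.mpr ⟨hq3, hq4⟩]
    have habs0 : 0 ≤ q.1 + |q.2| := add_nonneg hq1 (abs_nonneg _)
    calc |h₃ (w q, q.1, q.2)| ≤ C₁ * (w q ^ 2 + q.1 ^ 2 + q.2 ^ 2) := s1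
      _ ≤ C₁ * ((1 + C₂ ^ 2) * (q.1 ^ 2 + q.2 ^ 2)) := by nlinarith [hC₁.le]
      _ ≤ C₁ * ((1 + C₂ ^ 2) * (r₀ * (q.1 + |q.2|))) := by
          have h0 : (0 : ℝ) ≤ C₁ * (1 + C₂ ^ 2) := by positivity
          nlinarith
      _ = C₁ * (1 + C₂ ^ 2) * r₀ * (q.1 + |q.2|) := by ring
      _ ≤ |c| / 4 * (q.1 + |q.2|) := mul_le_mul_of_nonneg_right hkey habs0
  have hanti : AntitoneOn y (Ici (0 : ℝ)) := by
    apply antitoneOn_of_deriv_nonpos (convex_Ici 0)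
    · intro s hs
      exact (hyD s hs).continuousAt.continuousWithinAt
    · intro s hs
      rw [interior_Ici] at hs
      exact (hyD s hs.le).differentiableAt.differentiableWithinAt
    · intro s hs
      rw [interior_Ici] at hs
      rw [(hyD s hs.le).deriv]
      exact hF1le (x s)
  have hyle : ∀ t : ℝ, 0 ≤ t → y t ≤ y₀ := by
    intro t ht
    have := hanti self_mem_Ici (mem_Ici.mpr ht) ht
    rwa [hy0eq] at this
  have hyge : ∀ t : ℝ, 0 ≤ t → 0 ≤ y t := by
    intro t ht
    have hbar : -(y t) ≤ 0 :=
      barrier_lemma (u := fun s => -(y s)) (u' := fun s => -((F (x s)).1)) (b := 0)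
        ht (fun s hs _ => (hyD s hs).neg)
        (by show -(y 0) ≤ 0; rw [hy0eq]; linarith)
        (fun s _ _ hb => by
          show -((F (x s)).1) ≤ 0
          have hb' : (0 : ℝ) ≤ -(y s) := hb
          rw [hF1zero (x s) (neg_nonneg.mp hb')]
          norm_num)
    linarith
  have hzle : ∀ t : ℝ, 0 ≤ t → z t ≤ M := by
    intro t ht
    refine barrier_lemma ht (fun s hs _ => hzD s hs)
      (by rw [hz0eq]; exact le_trans (le_abs_self z₀) (le_max_right _ _)) ?_
    intro s hs0 _ hzs
    set u := pclamp r₀ (x s) with hu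
    have hur : u ∈ rect r₀ := hpc_rect (x s)
    obtain ⟨⟨hu1, hu2⟩, hu3, hu4⟩ := (hmem_rect u).mp hur
    have hys : y s ≤ y₀ := hyle s hs0.le
    have hu1M : u.1 ≤ M := by
      have h1 : min (x s).1 r₀ ≤ y₀ := le_trans (min_le_left _ _) hys
      have he : u.1 = max 0 (min (x s).1 r₀) := rfl
      rw [he]
      exact max_le hM0 (le_trans h1 (le_max_left _ _))
    have hu2M : M ≤ u.2 := by
      have he : u.2 = max (-r₀) (min (x s).2 r₀) := rfl
      rw [he]
      exact le_trans (le_min hzs hMr) (le_max_right _ _)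
    have h3 := h3bd u hur
    have habs2 : |u.2| = u.2 := abs_of_nonneg (le_trans hM0 hu2M)
    rw [habs2, habsc] at h3
    have hg : h₃ (w u, u.1, u.2) ≤ -c / 4 * (u.1 + u.2) := le_trans (le_abs_self _) h3
    rw [hF2]
    have hint1 : 0 ≤ (-c) * (u.2 - u.1) :=
      mul_nonneg (by linarith) (by linarith)
    have hint2 : 0 ≤ (-c) * u.2 := mul_nonneg (by linarith) (le_trans hM0 hu2M)
    nlinarith
  have hzge : ∀ t : ℝ, 0 ≤ t → -M ≤ z t := by
    intro t ht
    have hbar : -(z t) ≤ M := by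
      refine barrier_lemma (u := fun s => -(z s)) (u' := fun s => -((F (x s)).2)) (b := M)
        ht (fun s hs _ => (hzD s hs).neg)
        (by show -(z 0) ≤ M; rw [hz0eq]; exact le_trans (neg_le_abs z₀) (le_max_right _ _)) ?_
      intro s hs0 _ hb
      show -((F (x s)).2) ≤ 0
      have hb' : M ≤ -(z s) := hb
      set u := pclamp r₀ (x s) with hu
      have hur : u ∈ rect r₀ := hpc_rect (x s)
      obtain ⟨⟨hu1, hu2⟩, hu3, hu4⟩ := (hmem_rect u).mp hur
      have hys : y s ≤ y₀ := hyle s hs0.le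
      have hzs : z s ≤ -M := by linarith [hb']
      have hu1M : u.1 ≤ M := by
        have h1 : min (x s).1 r₀ ≤ y₀ := le_trans (min_le_left _ _) hys
        have he : u.1 = max 0 (min (x s).1 r₀) := rfl
        rw [he]
        exact max_le hM0 (le_trans h1 (le_max_left _ _))
      have hu2M : u.2 ≤ -M := by
        have he : min (x s).2 r₀ = (x s).2 := min_eq_left (by
          have : z s ≤ r₀ := by linarith [hM0, hr₀0.le]
          exact this)
        have he2 : u.2 = max (-r₀) (min (x s).2 r₀) := rfl
        rw [he2, he]
        exact max_le (by linarith) hzs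
      have h3 := h3bd u hur
      have habs2 : |u.2| = -u.2 := abs_of_nonpos (by linarith)
      rw [habs2, habsc] at h3
      have hg : -(h₃ (w u, u.1, u.2)) ≤ -c / 4 * (u.1 + -u.2) := le_trans (neg_le_abs _) h3
      rw [hF2]
      have hint1 : 0 ≤ (-c) * (-u.2) := mul_nonneg (by linarith) (by linarith)
      have hint2 : 0 ≤ (-c) * (-u.2 - u.1) := mul_nonneg (by linarith) (by linarith)
      nlinarith
    linarith
  have hrect_t : ∀ t : ℝ, 0 ≤ t → x t ∈ rect r₀ := by
    intro t ht
    rw [hmem_rect]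
    have h1 := hyge t ht
    have h2 := hyle t ht
    have h3 := hzle t ht
    have h4 := hzge t ht
    exact ⟨⟨h1, le_trans h2 hy₀r⟩, by linarith, by linarith⟩
  have hpcx : ∀ t : ℝ, 0 ≤ t → pclamp r₀ (x t) = x t := fun t ht => hpc_id _ (hrect_t t ht)
  have hFx1 : ∀ t : ℝ, 0 ≤ t → (F (x t)).1 = h₂ (w (y t, z t), y t, z t) := by
    intro t ht
    rw [hF1, hpcx t ht]
  have hFx2 : ∀ t : ℝ, 0 ≤ t → (F (x t)).2 = c * z t + h₃ (w (y t, z t), y t, z t) := by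
    intro t ht
    rw [hF2, hpcx t ht]
  have hydecay : ∀ ε : ℝ, 0 < ε → ∃ T', ∀ t, T' ≤ t → y t ≤ ε := by
    intro ε hε
    have hκ : 0 < C₁ * ε ^ p := mul_pos hC₁ (Real.rpow_pos_of_pos hε p)
    refine decay_lemma (T := 0) (u' := fun s => (F (x s)).1) hκ
      (fun t ht => hyD t ht) (fun t ht => hyge t ht) ?_
    intro s hs hεy
    have hball := hWball (x s) (hrect_t s hs)
    have h6 : h₂ (w (y s, z s), y s, z s) ≤ -C₁ * |y s| ^ p := hb6 _ hball
    have habs : ε ≤ |y s| := le_trans hεy (le_abs_self _)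
    have hrp : ε ^ p ≤ |y s| ^ p := Real.rpow_le_rpow hε.le habs (by linarith)
    show (F (x s)).1 ≤ -(C₁ * ε ^ p)
    rw [hFx1 s hs]
    have hmul : C₁ * ε ^ p ≤ C₁ * |y s| ^ p := mul_le_mul_of_nonneg_left hrp hC₁.le
    linarith
  have hytend : Tendsto y atTop (𝓝 0) := by
    rw [Metric.tendsto_atTop]
    intro ε hε
    obtain ⟨T, hT⟩ := hydecay (ε / 2) (by linarith)
    refine ⟨max T 0, fun t ht => ?_⟩
    have h1 := hT t (le_trans (le_max_left _ _) ht)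
    have h2 := hyge t (le_trans (le_max_right _ _) ht)
    rw [Real.dist_eq, sub_zero, abs_of_nonneg h2]
    linarith
  have hzdecay : ∀ ε : ℝ, 0 < ε → ∃ T', ∀ t, T' ≤ t → z t ^ 2 ≤ ε ^ 2 := by
    intro ε hε
    obtain ⟨T₀, hT₀⟩ := hydecay ε hε
    have hκ : 0 < |c| * ε ^ 2 := mul_pos hcabs (by positivity)
    refine decay_lemma (T := max T₀ 0) (u := fun s => z s ^ 2)
      (u' := fun s => 2 * z s * (F (x s)).2) hκ ?_ (fun t _ => sq_nonneg _) ?_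
    · intro t htT
      have ht0 : (0 : ℝ) ≤ t := le_trans (le_max_right _ _) htT
      have hD := (hzD t ht0).pow 2
      norm_num at hD
      exact hD
    · intro s hsT hsq
      have hsq' : ε ^ 2 ≤ z s ^ 2 := hsq
      have hs0 : (0 : ℝ) ≤ s := le_trans (le_max_right _ _) hsT
      have hys : y s ≤ ε := hT₀ s (le_trans (le_max_left _ _) hsT)
      have habsz : ε ≤ |z s| := by nlinarith [abs_nonneg (z s), sq_abs (z s), hsq']
      have h3 : |h₃ (w (y s, z s), y s, z s)| ≤ |c| / 4 * (y s + |z s|) :=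
        h3bd (x s) (hrect_t s hs0)
      have hG : z s * h₃ (w (y s, z s), y s, z s)
          ≤ |z s| * |h₃ (w (y s, z s), y s, z s)| := by
        calc z s * h₃ (w (y s, z s), y s, z s) ≤ |z s * h₃ (w (y s, z s), y s, z s)| :=
              le_abs_self _
          _ = |z s| * |h₃ (w (y s, z s), y s, z s)| := abs_mul _ _
      show 2 * z s * (F (x s)).2 ≤ -(|c| * ε ^ 2)
      rw [hFx2 s hs0]
      have hys' : y s ≤ |z s| := le_trans hys habsz
      have hint1 : |z s| * |h₃ (w (y s, z s), y s, z s)| ≤ |z s| * (|c| / 4 * (y s + |z s|)) :=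
        mul_le_mul_of_nonneg_left h3 (abs_nonneg _)
      have hint2 : c * z s ^ 2 ≤ c * ε ^ 2 := mul_le_mul_of_nonpos_left hsq' hc.le
      nlinarith [sq_abs (z s), abs_nonneg (z s), mul_le_mul_of_nonneg_left hys' (abs_nonneg (z s))]
  have hztend : Tendsto z atTop (𝓝 0) := by
    rw [Metric.tendsto_atTop]
    intro ε hε
    obtain ⟨T, hT⟩ := hzdecay (ε / 2) (by linarith)
    refine ⟨T, fun t ht => ?_⟩
    have h1 := hT t ht
    rw [Real.dist_eq, sub_zero]
    have h2 : |z t| ≤ ε / 2 := by nlinarith [abs_nonneg (z t), sq_abs (z t)]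
    linarith
  refine ⟨y, z, hy0eq, hz0eq, fun t ht => ⟨?_, ?_⟩,
    fun t ht => ⟨hyge t ht, hyle t ht, abs_le.mpr ⟨hzge t ht, hzle t ht⟩⟩, ?_⟩
  · have := hyD t ht
    rwa [hFx1 t ht] at this
  · have := hzD t ht
    rwa [hFx2 t ht] at this
  · exact hytend.prodMk_nhds hztend
end
end
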